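/- arXiv:2403.15645 — 6 statements merged into one kernel-verified Lean document; each statement's English description precedes it below -/
import Mathlib

section
/- Let n ≥ 3k−1 and k ≥ 2, and let X be a set of vertices of the Kneser graph KG(n,k). Then X is a total mutual-visibility set in KG(n,k) if and only if the k-uniform hypergraph on [n] whose edges are the k-sets corresponding to vertices outside X has transversal number at least 2k. -/
/-- A transversal of a hypergraph given by its edge set `E`: a vertex set
meeting every edge. -/
def IsTransversal {α : Type*} [DecidableEq α] (E : Finset (Finset α)) (T : Finset α) : Prop :=
  ∀ e ∈ E, (e ∩ T).Nonempty

/-- The transversal number: minimum cardinality of a transversal. -/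
noncomputable def transversalNum {α : Type*} [DecidableEq α] (E : Finset (Finset α)) : ℕ :=
  sInf {m | ∃ T : Finset α, IsTransversal E T ∧ T.card = m}

/-- Two vertices `u` and `v` are `X`-visible if some shortest `u,v`-path has
no internal vertex in `X`. -/
def XVisible {V : Type*} (G : SimpleGraph V) (X : Set V) (u v : V) : Prop :=
  ∃ p : G.Walk u v, p.length = G.dist u v ∧
    ∀ w ∈ p.support, w ∈ X → w = u ∨ w = v

/-- `X` is a total mutual-visibility set if every pair of vertices is `X`-visible. -/
def IsTotalMVSet {V : Type*} (G : SimpleGraph V) (X : Set V) : Prop :=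
  ∀ u v : V, XVisible G X u v

/-- `X` is a mutual-visibility set if every pair of vertices of `X` is `X`-visible. -/
def IsMVSet {V : Type*} (G : SimpleGraph V) (X : Set V) : Prop :=
  ∀ u ∈ X, ∀ v ∈ X, XVisible G X u v

/-- The total mutual-visibility number of a graph. -/
noncomputable def totalMVNumber {V : Type*} [Fintype V] (G : SimpleGraph V) : ℕ :=
  sSup {m | ∃ X : Finset V, IsTotalMVSet G ↑X ∧ X.card = m}

/-- The mutual-visibility number of a graph. -/
noncomputable def mvNumber {V : Type*} [Fintype V] (G : SimpleGraph V) : ℕ :=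
  sSup {m | ∃ X : Finset V, IsMVSet G ↑X ∧ X.card = m}

/-- The Kneser graph `KG(n,k)`: vertices are the `k`-subsets of `[n]`,
adjacent iff disjoint. -/
def KneserGraph (n k : ℕ) : SimpleGraph {A : Finset (Fin n) // A.card = k} where
  Adj A B := A ≠ B ∧ Disjoint A.1 B.1
  symm := ⟨fun A B h => ⟨h.1.symm, h.2.symm⟩⟩
  loopless := ⟨fun A h => h.1 rfl⟩


lemma dist_eq_two' {V : Type*} {G : SimpleGraph V} {u v c : V} (hne : u ≠ v)
    (hna : ¬ G.Adj u v) (h1 : G.Adj u c) (h2 : G.Adj c v) : G.dist u v = 2 := by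
  let p : G.Walk u v := .cons h1 (.cons h2 .nil)
  have hle : G.dist u v ≤ 2 := by
    have := SimpleGraph.dist_le p
    simpa [p] using this
  have h0 : G.dist u v ≠ 0 :=
    fun h => hne (p.reachable.dist_eq_zero_iff.mp h)
  have h1' : G.dist u v ≠ 1 := fun h => hna (SimpleGraph.dist_eq_one_iff_adj.mp h)
  omega

lemma walk_length_two' {V : Type*} {G : SimpleGraph V} {u v : V} (p : G.Walk u v)
    (h : p.length = 2) : ∃ c, G.Adj u c ∧ G.Adj c v ∧ p.support = [u, c, v] := by
  cases p with
  | nil => simp at h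
  | cons h1 q =>
    cases q with
    | nil => simp at h
    | cons h2 r =>
      cases r with
      | nil => exact ⟨_, h1, h2, by simp⟩
      | cons h3 s => simp [SimpleGraph.Walk.length_cons] at h


/-- For `n ≥ 3k - 1`, a vertex set `X` of `KG(n,k)` is a total
mutual-visibility set iff the hypergraph of the `k`-sets outside `X` has
transversal number at least `2k`. -/
theorem kneser_totalMV_iff_transversal (n k : ℕ) (hk : 2 ≤ k) (hn : 3 * k - 1 ≤ n)
    (X : Finset {A : Finset (Fin n) // A.card = k}) :
    IsTotalMVSet (KneserGraph n k) ↑X ↔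
      2 * k ≤ transversalNum ((Finset.univ \ X).image fun v => v.1) := by
  classical
  set E := (Finset.univ \ X).image (fun v : {A : Finset (Fin n) // A.card = k} => v.1) with hE
  have hcard : ∀ e ∈ E, e.card = k := by
    intro e he
    obtain ⟨C, -, rfl⟩ := Finset.mem_image.mp he
    exact C.2
  have hmem : ∀ (C : {A : Finset (Fin n) // A.card = k}), C ∉ X → C.1 ∈ E := fun C hC =>
    Finset.mem_image.mpr ⟨C, Finset.mem_sdiff.mpr ⟨Finset.mem_univ _, hC⟩, rfl⟩
  constructor
  · intro hTMV
    refine le_csInf ⟨Finset.univ.card, Finset.univ, fun e he => ?_, rfl⟩ ?_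
    · rw [Finset.inter_univ, ← Finset.card_pos, hcard e he]; omega
    · rintro m ⟨T, hT, rfl⟩
      by_contra hlt
      push_neg at hlt
      obtain ⟨S, hTS, -, hScard⟩ := Finset.exists_subsuperset_card_eq (Finset.subset_univ T)
        ((by omega : T.card ≤ 2 * k - 1))
        (by simp only [Finset.card_univ, Fintype.card_fin]; omega)
      have hSne : S.Nonempty := Finset.card_pos.mp (by omega)
      obtain ⟨x, hx⟩ := hSne
      have herase : (S.erase x).card = 2 * k - 2 := by
        rw [Finset.card_erase_of_mem hx]; omega
      obtain ⟨A, hAsub, hAcard⟩ := Finset.exists_subset_card_eq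
        (s := S.erase x) (n := k - 1) (by omega)
      set B := S.erase x \ A with hB
      have hBcard : B.card = k - 1 := by
        rw [hB, Finset.card_sdiff_of_subset hAsub]; omega
      have hxA : x ∉ A := fun h => (Finset.notMem_erase x S) (hAsub h)
      have hxB : x ∉ B := fun h => (Finset.notMem_erase x S) (Finset.mem_sdiff.mp h).1
      have hucard : (insert x A).card = k := by
        rw [Finset.card_insert_of_notMem hxA]; omega
      have hvcard : (insert x B).card = k := by
        rw [Finset.card_insert_of_notMem hxB]; omega
      set u : {A : Finset (Fin n) // A.card = k} := ⟨insert x A, hucard⟩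
      set v : {A : Finset (Fin n) // A.card = k} := ⟨insert x B, hvcard⟩
      have hAB : A ∪ B = S.erase x := Finset.union_sdiff_of_subset hAsub
      have hSuv : u.1 ∪ v.1 = S := by
        show insert x A ∪ insert x B = S
        rw [Finset.insert_union, Finset.union_insert, Finset.insert_idem, hAB,
          Finset.insert_erase hx]
      have hune : u ≠ v := by
        obtain ⟨a, ha⟩ := Finset.card_pos.mp (show 0 < A.card by omega)
        intro h
        have hav : a ∈ insert x B := by
          have huv1 : u.1 = v.1 := congrArg Subtype.val h
          have : a ∈ u.1 := Finset.mem_insert_of_mem ha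
          rwa [huv1] at this
        rcases Finset.mem_insert.mp hav with rfl | haB
        · exact hxA ha
        · exact (Finset.mem_sdiff.mp haB).2 ha
      have hnadj : ¬ (KneserGraph n k).Adj u v := by
        rintro ⟨-, hd⟩
        exact Finset.disjoint_left.mp hd (Finset.mem_insert_self x A)
          (Finset.mem_insert_self x B)
      have hcompl : k ≤ (Finset.univ \ S).card := by
        rw [Finset.card_sdiff_of_subset (Finset.subset_univ S)]
        simp; omega
      obtain ⟨c, hcsub, hccard⟩ := Finset.exists_subset_card_eq hcompl
      set C : {A : Finset (Fin n) // A.card = k} := ⟨c, hccard⟩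
      have hdisjS : Disjoint c S := by
        refine Finset.disjoint_left.mpr fun a hac haS => ?_
        exact (Finset.mem_sdiff.mp (hcsub hac)).2 haS
      have hCu : Disjoint u.1 c := (hdisjS.mono_right (hSuv ▸ Finset.subset_union_left)).symm
      have hCv : Disjoint c v.1 := hdisjS.mono_right (hSuv ▸ Finset.subset_union_right)
      have hCnonempty : c.Nonempty := Finset.card_pos.mp (by omega)
      have hadj1 : (KneserGraph n k).Adj u C := by
        refine ⟨fun h => ?_, hCu⟩
        obtain ⟨a, ha⟩ := hCnonempty
        exact Finset.disjoint_right.mp hCu ha (by rw [h]; exact ha)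
      have hadj2 : (KneserGraph n k).Adj C v := by
        refine ⟨fun h => ?_, hCv⟩
        obtain ⟨a, ha⟩ := hCnonempty
        exact Finset.disjoint_left.mp hCv ha (by rw [← h]; exact ha)
      have hdist : (KneserGraph n k).dist u v = 2 := dist_eq_two' hune hnadj hadj1 hadj2
      obtain ⟨p, hplen, hpX⟩ := hTMV u v
      rw [hdist] at hplen
      obtain ⟨w, hw1, hw2, hsup⟩ := walk_length_two' p hplen
      have hwu : w ≠ u := fun h => (KneserGraph n k).loopless.irrefl u (by rwa [h] at hw1)
      have hwv : w ≠ v := fun h => (KneserGraph n k).loopless.irrefl v (by rwa [h] at hw2)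
      have hwX : w ∉ X := by
        intro h
        rcases hpX w (by rw [hsup]; simp) (Finset.mem_coe.mpr h) with h' | h'
        · exact hwu h'
        · exact hwv h'
      obtain ⟨y, hy⟩ := hT w.1 (hmem w hwX)
      obtain ⟨hyw, hyT⟩ := Finset.mem_inter.mp hy
      have hyS : y ∈ u.1 ∪ v.1 := hSuv ▸ hTS hyT
      rcases Finset.mem_union.mp hyS with h | h
      · exact Finset.disjoint_left.mp hw1.2 h hyw
      · exact Finset.disjoint_left.mp hw2.2 hyw h
  · intro hge u v
    by_cases huv : u = v
    · subst huv
      exact ⟨.nil, by simp [SimpleGraph.dist_self], by simp⟩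
    by_cases hadj : (KneserGraph n k).Adj u v
    · refine ⟨.cons hadj .nil, ?_, ?_⟩
      · simp [SimpleGraph.dist_eq_one_iff_adj.mpr hadj]
      · intro w hw _
        simpa using hw
    · have hndisj : ¬ Disjoint u.1 v.1 := fun h => hadj ⟨huv, h⟩
      have hinter : (u.1 ∩ v.1).Nonempty := Finset.not_disjoint_iff_nonempty_inter.mp hndisj
      have hScard : (u.1 ∪ v.1).card ≤ 2 * k - 1 := by
        have h1 := Finset.card_union_add_card_inter u.1 v.1
        have h2 := Finset.card_pos.mpr hinter
        rw [u.2, v.2] at h1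
        omega
      have hnotT : ¬ IsTransversal E (u.1 ∪ v.1) := by
        intro hT
        have : transversalNum E ≤ (u.1 ∪ v.1).card :=
          csInf_le (OrderBot.bddBelow _) ⟨u.1 ∪ v.1, hT, rfl⟩
        omega
      rw [IsTransversal] at hnotT
      push_neg at hnotT
      obtain ⟨e, heE, hne⟩ := hnotT
      obtain ⟨C, hC, rfl⟩ := Finset.mem_image.mp heE
      have hCX : C ∉ X := (Finset.mem_sdiff.mp hC).2
      have hdisj : Disjoint C.1 (u.1 ∪ v.1) := by
        rw [Finset.disjoint_iff_inter_eq_empty]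
        exact hne
      have hCne : C.1.Nonempty := Finset.card_pos.mp (by rw [C.2]; omega)
      have hadj1 : (KneserGraph n k).Adj u C := by
        refine ⟨fun h => ?_, (hdisj.mono_right Finset.subset_union_left).symm⟩
        obtain ⟨a, ha⟩ := hCne
        exact Finset.disjoint_left.mp hdisj ha (Finset.mem_union_left _ (by rw [h]; exact ha))
      have hadj2 : (KneserGraph n k).Adj C v := by
        refine ⟨fun h => ?_, hdisj.mono_right Finset.subset_union_right⟩
        obtain ⟨a, ha⟩ := hCne
        exact Finset.disjoint_left.mp hdisj ha (Finset.mem_union_right _ (by rw [← h]; exact ha))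
      have hdist := dist_eq_two' huv hadj hadj1 hadj2
      refine ⟨.cons hadj1 (.cons hadj2 .nil), by simp [hdist], ?_⟩
      intro w hw hwX
      simp [SimpleGraph.Walk.support_cons] at hw
      rcases hw with rfl | rfl | rfl
      · left; rfl
      · exact absurd (Finset.mem_coe.mp hwX) hCX
      · right; rfl
end

section
/- If 2k+1 ≤ n ≤ 3k−1 and k ≥ 2, then the total mutual-visibility number of the Kneser graph KG(n,k) equals 0. -/
theorem key {n k : ℕ} (hk : 2 ≤ k) (h1 : 2 * k + 1 ≤ n) (h2 : n ≤ 3 * k - 1)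
    {X : Set {A : Finset (Fin n) // A.card = k}}
    (hX : IsTotalMVSet (KneserGraph n k) X) : X = ∅ := by
  by_contra hne
  obtain ⟨x, hx⟩ := Set.nonempty_iff_ne_empty.2 hne
  -- complement of x
  set C : Finset (Fin n) := x.1ᶜ with hCdef
  have hC : C.card = n - k := by
    simp [hCdef, Finset.card_compl, x.2]
  have hCk : k ≤ C.card := by omega
  obtain ⟨u, huC, hu⟩ := Finset.exists_subset_card_eq hCk
  obtain ⟨v, hdv, hvC, hv⟩ :=
    Finset.exists_subsuperset_card_eq (n := k) (Finset.sdiff_subset (s := C) (t := u))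
      (by rw [Finset.card_sdiff_of_subset huC]; omega) (by omega)
  have huv : u ∪ v = C := by
    apply Finset.Subset.antisymm (Finset.union_subset huC hvC)
    intro a ha
    by_cases h : a ∈ u
    · exact Finset.mem_union_left _ h
    · exact Finset.mem_union_right _ (hdv (Finset.mem_sdiff.2 ⟨ha, h⟩))
  have hxu : Disjoint x.1 u := disjoint_compl_right.mono_right huC
  have hxv : Disjoint x.1 v := disjoint_compl_right.mono_right hvC
  have hxu' : x ≠ ⟨u, hu⟩ := by
    intro h
    have h' : x.1 = u := by rw [h]
    rw [h', disjoint_self] at hxu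
    have := hu
    rw [hxu] at this
    simp at this; omega
  have hxv' : x ≠ ⟨v, hv⟩ := by
    intro h
    have h' : x.1 = v := by rw [h]
    rw [h', disjoint_self] at hxv
    have := hv
    rw [hxv] at this
    simp at this; omega
  have hne_uv : (⟨u, hu⟩ : {A : Finset (Fin n) // A.card = k}) ≠ ⟨v, hv⟩ := by
    intro h
    have h' : u = v := congrArg Subtype.val h
    have hc : v = C := by rw [← huv, h', Finset.union_self]
    have := hv
    rw [hc, hC] at this
    omega

  have hadj_ux : (KneserGraph n k).Adj ⟨u, hu⟩ x := ⟨fun h => hxu' h.symm, hxu.symm⟩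
  have hadj_xv : (KneserGraph n k).Adj x ⟨v, hv⟩ := ⟨hxv', hxv⟩
  have hnadj : ¬ (KneserGraph n k).Adj ⟨u, hu⟩ ⟨v, hv⟩ := by
    rintro ⟨-, hd⟩
    have hcc : (u ∪ v).card = u.card + v.card := Finset.card_union_of_disjoint hd
    rw [huv, hC, hu, hv] at hcc
    omega
  set w2 : (KneserGraph n k).Walk ⟨u, hu⟩ ⟨v, hv⟩ :=
    SimpleGraph.Walk.cons hadj_ux (SimpleGraph.Walk.cons hadj_xv SimpleGraph.Walk.nil)
    with hw2
  have hw2len : w2.length = 2 := by simp [hw2]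
  have hd2 : (KneserGraph n k).dist ⟨u, hu⟩ ⟨v, hv⟩ = 2 := by
    have hle := SimpleGraph.dist_le w2
    rw [hw2len] at hle
    have hr : (KneserGraph n k).Reachable ⟨u, hu⟩ ⟨v, hv⟩ := ⟨w2⟩
    have hpos := hr.pos_dist_of_ne hne_uv
    have hne1 : (KneserGraph n k).dist ⟨u, hu⟩ ⟨v, hv⟩ ≠ 1 := by
      intro h; exact hnadj ((SimpleGraph.dist_eq_one_iff_adj).1 h)
    omega
  obtain ⟨p, hplen, hpint⟩ := hX ⟨u, hu⟩ ⟨v, hv⟩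
  rw [hd2] at hplen
  cases p with
  | nil => simp at hplen
  | cons h q =>
    cases q with
    | nil => simp at hplen
    | cons h' q' =>
      cases q' with
      | cons h'' q'' => simp at hplen
      | nil =>
        rename_i m
        have hmu : Disjoint m.1 u := h.2.symm
        have hmv : Disjoint m.1 v := h'.2
        have hmx : m.1 ⊆ x.1 := by
          intro a ha
          have hnu : a ∉ u := fun hh => (Finset.disjoint_left.1 hmu) ha hh
          have hnv : a ∉ v := fun hh => (Finset.disjoint_left.1 hmv) ha hh
          have : a ∉ C := by
            rw [← huv]; simp [hnu, hnv]
          simpa [hCdef] using this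
        have hmx' : m = x := by
          apply Subtype.ext
          exact Finset.eq_of_subset_of_card_le hmx (by rw [m.2, x.2])
        have hor := hpint m (by simp) (by rw [hmx']; exact hx)
        rcases hor with h1 | h1
        · exact hxu' (hmx' ▸ h1)
        · exact hxv' (hmx' ▸ h1)

/-- If `2k + 1 ≤ n ≤ 3k - 1` and `k ≥ 2`, the total mutual-visibility number
of `KG(n,k)` is `0`. -/
theorem kneser_totalMVNumber_eq_zero (n k : ℕ) (hk : 2 ≤ k)
    (h1 : 2 * k + 1 ≤ n) (h2 : n ≤ 3 * k - 1) :
    totalMVNumber (KneserGraph n k) = 0 := by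
  have hsub : {m | ∃ X : Finset {A : Finset (Fin n) // A.card = k},
      IsTotalMVSet (KneserGraph n k) ↑X ∧ X.card = m} ⊆ {0} := by
    rintro m ⟨X, hXt, rfl⟩
    have h0 := key hk h1 h2 hXt
    have hXe : X = ∅ := by
      simpa using h0
    simp [hXe]
  unfold totalMVNumber
  rcases Set.subset_singleton_iff_eq.1 hsub with h | h
  · rw [h, csSup_empty]; rfl
  · rw [h, csSup_singleton]
end

section
/- For n ≥ 3k and k ≥ 2, the total mutual-visibility number of the Kneser graph KG(n,k) equals C(n,k) minus the minimum number of edges of a k-uniform hypergraph on n vertices with transversal number at least 2k. -/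
/-- `C*(n,k)`: the minimum number of edges of a `k`-uniform hypergraph on an
`n`-element vertex set whose transversal number is at least `2k`. -/
noncomputable def Cstar (n k : ℕ) : ℕ :=
  sInf {m | ∃ E : Finset (Finset (Fin n)),
    (∀ e ∈ E, e.card = k) ∧ 2 * k ≤ transversalNum E ∧ E.card = m}

section Aux

variable {n k : ℕ}

/-- Vertices of the Kneser graph. -/
abbrev KVert (n k : ℕ) := {A : Finset (Fin n) // A.card = k}

lemma kvert_nonempty (hk : 2 ≤ k) (A : KVert n k) : A.1.Nonempty := by
  rw [← Finset.card_pos, A.2]; omega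

/-- Any two vertices have a common neighbor candidate. -/
lemma exists_common (hk : 2 ≤ k) (hn : 3 * k ≤ n) (A B : KVert n k) :
    ∃ C : KVert n k, Disjoint C.1 A.1 ∧ Disjoint C.1 B.1 := by
  have hcard : k ≤ ((A.1 ∪ B.1)ᶜ).card := by
    rw [Finset.card_compl]
    have h1 := Finset.card_union_le A.1 B.1
    have h2 := Finset.card_le_univ (A.1 ∪ B.1)
    simp only [A.2, B.2, Fintype.card_fin] at *
    omega
  obtain ⟨C, hC, hCcard⟩ := Finset.exists_subset_card_eq hcard
  refine ⟨⟨C, hCcard⟩, ?_, ?_⟩ <;>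
  · rw [Finset.disjoint_left]
    intro a ha hb
    have := hC ha
    simp only [Finset.mem_compl, Finset.mem_union] at this
    tauto

lemma adj_of_disjoint (hk : 2 ≤ k) {A B : KVert n k} (h : Disjoint A.1 B.1) :
    (KneserGraph n k).Adj A B := by
  refine ⟨?_, h⟩
  intro he
  subst he
  have : A.1 = ∅ := by simpa using disjoint_self.mp h
  exact (kvert_nonempty hk A).ne_empty this

lemma dist_eq_two (hk : 2 ≤ k) (hn : 3 * k ≤ n) {A B : KVert n k}
    (hne : A ≠ B) (hint : ¬ Disjoint A.1 B.1) :
    (KneserGraph n k).dist A B = 2 := by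
  obtain ⟨C, hCA, hCB⟩ := exists_common hk hn A B
  have hAC : (KneserGraph n k).Adj A C := ((adj_of_disjoint hk hCA).symm)
  have hCB' : (KneserGraph n k).Adj C B := adj_of_disjoint hk hCB
  set p : (KneserGraph n k).Walk A B :=
    SimpleGraph.Walk.cons hAC (SimpleGraph.Walk.cons hCB' SimpleGraph.Walk.nil) with hp
  have hle : (KneserGraph n k).dist A B ≤ 2 := by
    have := SimpleGraph.dist_le p
    simpa [hp] using this
  have h0 : (KneserGraph n k).dist A B ≠ 0 :=
    fun h => hne ((p.reachable).dist_eq_zero_iff.mp h)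
  have h1 : (KneserGraph n k).dist A B ≠ 1 :=
    fun h => hint (SimpleGraph.dist_eq_one_iff_adj.mp h).2
  omega

/-- Characterization of total mutual visibility in the Kneser graph. -/
lemma tmv_iff (hk : 2 ≤ k) (hn : 3 * k ≤ n) (X : Set (KVert n k)) :
    IsTotalMVSet (KneserGraph n k) X ↔
    ∀ A B : KVert n k, A ≠ B → ¬ Disjoint A.1 B.1 →
      ∃ w : KVert n k, w ∉ X ∧ Disjoint w.1 A.1 ∧ Disjoint w.1 B.1 := by
  constructor
  · intro hX A B hne hint
    obtain ⟨p, hlen, hsupp⟩ := hX A B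
    rw [dist_eq_two hk hn hne hint] at hlen
    cases p with
    | nil => simp at hlen
    | cons h q =>
      cases q with
      | nil => simp at hlen
      | cons h' q' =>
        cases q' with
        | cons h'' q'' => simp [SimpleGraph.Walk.length_cons] at hlen
        | nil =>
          rename_i w
          refine ⟨w, ?_, h.2.symm, h'.2⟩
          intro hwX
          rcases hsupp w (by simp) hwX with h1 | h1
          · exact h.1 h1.symm
          · exact h'.1 h1
  · intro hvis u v
    by_cases heq : u = v
    · subst heq
      refine ⟨SimpleGraph.Walk.nil, by simp [SimpleGraph.dist_self], ?_⟩
      intro w hw _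
      simp at hw
      exact Or.inl hw
    · by_cases hadj : (KneserGraph n k).Adj u v
      · refine ⟨SimpleGraph.Walk.cons hadj SimpleGraph.Walk.nil, ?_, ?_⟩
        · simp [SimpleGraph.dist_eq_one_iff_adj.mpr hadj]
        · intro w hw _
          simpa using hw
      · have hint : ¬ Disjoint u.1 v.1 := fun hd => hadj ⟨heq, hd⟩
        obtain ⟨w, hwX, hwu, hwv⟩ := hvis u v heq hint
        have h1 : (KneserGraph n k).Adj u w := (adj_of_disjoint hk hwu).symm
        have h2 : (KneserGraph n k).Adj w v := adj_of_disjoint hk hwv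
        refine ⟨SimpleGraph.Walk.cons h1 (SimpleGraph.Walk.cons h2 SimpleGraph.Walk.nil),
          ?_, ?_⟩
        · simp [dist_eq_two hk hn heq hint]
        · intro x hx hxX
          simp only [SimpleGraph.Walk.support_cons, SimpleGraph.Walk.support_nil,
            List.mem_cons, List.mem_singleton] at hx
          rcases hx with rfl | rfl | rfl | hx
          · exact Or.inl rfl
          · exact absurd hxX hwX
          · exact Or.inr rfl
          · simp at hx

/-- The hypergraph associated with the complement of a vertex set. -/
def EofX (X : Finset (KVert n k)) : Finset (Finset (Fin n)) :=
  Xᶜ.image Subtype.val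

lemma mem_EofX {X : Finset (KVert n k)} {e : Finset (Fin n)} :
    e ∈ EofX X ↔ ∃ w : KVert n k, w ∉ X ∧ w.1 = e := by
  simp [EofX]

lemma EofX_uniform (X : Finset (KVert n k)) : ∀ e ∈ EofX X, e.card = k := by
  intro e he
  obtain ⟨w, _, rfl⟩ := mem_EofX.mp he
  exact w.2

lemma card_EofX (X : Finset (KVert n k)) :
    (EofX X).card = n.choose k - X.card := by
  rw [EofX, Finset.card_image_of_injective _ Subtype.val_injective,
    Finset.card_compl, Fintype.card_finset_len, Fintype.card_fin]

/-- Helper: to bound the transversal number below it suffices to bound all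
transversals. -/
lemma tau_ge (hk : 2 ≤ k) (E : Finset (Finset (Fin n)))
    (hu : ∀ e ∈ E, e.card = k)
    (h : ∀ T : Finset (Fin n), IsTransversal E T → 2 * k ≤ T.card) :
    2 * k ≤ transversalNum E := by
  apply le_csInf
  · refine ⟨(Finset.univ : Finset (Fin n)).card, Finset.univ, ?_, rfl⟩
    intro e he
    rw [Finset.inter_univ, ← Finset.card_pos, hu e he]
    omega
  · rintro m ⟨T, hT, rfl⟩
    exact h T hT

/-- Total mutual visibility implies large transversal number. -/
lemma tmv_to_tau (hk : 2 ≤ k) (hn : 3 * k ≤ n) (X : Finset (KVert n k))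
    (hX : IsTotalMVSet (KneserGraph n k) ↑X) :
    2 * k ≤ transversalNum (EofX X) := by
  apply tau_ge hk _ (EofX_uniform X)
  intro T hT
  by_contra hlt
  push_neg at hlt
  -- pad T to a set T' of size 2k-1
  obtain ⟨T', hTT', hT'card⟩ :=
    Finset.exists_superset_card_eq (s := T) (n := 2 * k - 1) (by omega)
      (by rw [Fintype.card_fin]; omega)
  have hT' : IsTransversal (EofX X) T' := by
    intro e he
    obtain ⟨a, ha⟩ := hT e he
    exact ⟨a, Finset.mem_inter.mpr ⟨(Finset.mem_inter.mp ha).1,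
      hTT' (Finset.mem_inter.mp ha).2⟩⟩
  -- split T' into two intersecting k-sets
  obtain ⟨A, hAT', hAcard⟩ :=
    Finset.exists_subset_card_eq (n := k) (s := T') (by omega)
  obtain ⟨a, ha⟩ : A.Nonempty := by rw [← Finset.card_pos, hAcard]; omega
  set B : Finset (Fin n) := insert a (T' \ A) with hB
  have haB : a ∈ B := Finset.mem_insert_self _ _
  have hBcard : B.card = k := by
    rw [hB, Finset.card_insert_of_notMem (by simp [Finset.mem_sdiff, ha]),
      Finset.card_sdiff_of_subset hAT', hT'card, hAcard]
    omega
  have hunion : A ∪ B = T' := by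
    rw [hB, Finset.union_insert, Finset.union_sdiff_of_subset hAT']
    exact Finset.insert_eq_self.mpr (hAT' ha)
  have hABne : A ≠ B := by
    intro he
    have : T' ⊆ A := by rw [← hunion, ← he, Finset.union_self]
    have := Finset.card_le_card this
    omega
  have hABint : ¬ Disjoint A B := Finset.not_disjoint_iff.mpr ⟨a, ha, haB⟩
  obtain ⟨w, hwX, hwA, hwB⟩ := (tmv_iff hk hn ↑X).mp hX ⟨A, hAcard⟩ ⟨B, hBcard⟩
    (by simp [Subtype.ext_iff, hABne]) hABint
  have hwE : w.1 ∈ EofX X := mem_EofX.mpr ⟨w, (by simpa using hwX), rfl⟩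
  obtain ⟨b, hb⟩ := hT' w.1 hwE
  rw [Finset.mem_inter, ← hunion, Finset.mem_union] at hb
  rcases hb.2 with h | h
  · exact Finset.disjoint_left.mp hwA hb.1 h
  · exact Finset.disjoint_left.mp hwB hb.1 h

/-- Large transversal number gives total mutual visibility. -/
lemma tau_to_tmv (hk : 2 ≤ k) (hn : 3 * k ≤ n) (E : Finset (Finset (Fin n)))
    (hu : ∀ e ∈ E, e.card = k) (ht : 2 * k ≤ transversalNum E) :
    IsTotalMVSet (KneserGraph n k) {A : KVert n k | A.1 ∉ E} := by
  rw [tmv_iff hk hn]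
  intro A B hne hint
  have hcardU : (A.1 ∪ B.1).card < 2 * k := by
    have h1 := Finset.card_union_add_card_inter A.1 B.1
    obtain ⟨a, ha1, ha2⟩ := Finset.not_disjoint_iff.mp hint
    have h2 : 0 < (A.1 ∩ B.1).card :=
      Finset.card_pos.mpr ⟨a, Finset.mem_inter.mpr ⟨ha1, ha2⟩⟩
    simp only [A.2, B.2] at h1
    omega
  have hnottr : ¬ IsTransversal E (A.1 ∪ B.1) := by
    intro h
    have : transversalNum E ≤ (A.1 ∪ B.1).card := Nat.sInf_le ⟨_, h, rfl⟩
    omega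
  simp only [IsTransversal, not_forall] at hnottr
  obtain ⟨e, he, hne'⟩ := hnottr
  rw [Finset.not_nonempty_iff_eq_empty, ← Finset.disjoint_iff_inter_eq_empty,
    Finset.disjoint_union_right] at hne'
  exact ⟨⟨e, hu e he⟩, by simp [he], hne'.1, hne'.2⟩

end Aux

/-- For `n ≥ 3k` and `k ≥ 2`, the total mutual-visibility number of `KG(n,k)`
equals `C(n,k) - C*(n,k)`. -/
theorem kneser_totalMVNumber (n k : ℕ) (hk : 2 ≤ k) (hn : 3 * k ≤ n) :
    totalMVNumber (KneserGraph n k) = n.choose k - Cstar n k := by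
  -- the set defining Cstar is nonempty: take all k-subsets
  have hCne : {m | ∃ E : Finset (Finset (Fin n)),
      (∀ e ∈ E, e.card = k) ∧ 2 * k ≤ transversalNum E ∧ E.card = m}.Nonempty := by
    refine ⟨_, Finset.powersetCard k Finset.univ, ?_, ?_, rfl⟩
    · intro e he
      exact (Finset.mem_powersetCard.mp he).2
    · apply tau_ge hk
      · intro e he
        exact (Finset.mem_powersetCard.mp he).2
      · intro T hT
        by_contra hlt
        push_neg at hlt
        have hTc : k ≤ Tᶜ.card := by
          rw [Finset.card_compl, Fintype.card_fin]
          omega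
        obtain ⟨e, heT, hecard⟩ := Finset.exists_subset_card_eq hTc
        have heE : e ∈ Finset.powersetCard k Finset.univ :=
          Finset.mem_powersetCard.mpr ⟨Finset.subset_univ e, hecard⟩
        obtain ⟨b, hb⟩ := hT e heE
        rw [Finset.mem_inter] at hb
        exact absurd (heT hb.1) (by simp [hb.2])
  have hCmem := Nat.sInf_mem hCne
  obtain ⟨E₀, hu₀, ht₀, hcard₀⟩ := hCmem
  have hcard₀' : E₀.card = Cstar n k := hcard₀
  -- the extremal total mutual-visibility set
  classical
  set X₀ : Finset (KVert n k) := Finset.univ.filter (fun A => A.1 ∉ E₀) with hX₀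
  have hX₀coe : (↑X₀ : Set (KVert n k)) = {A : KVert n k | A.1 ∉ E₀} := by
    ext A; simp [hX₀]
  have hX₀tmv : IsTotalMVSet (KneserGraph n k) ↑X₀ := by
    rw [hX₀coe]
    exact tau_to_tmv hk hn E₀ hu₀ ht₀
  have hEX₀ : EofX X₀ = E₀ := by
    ext e
    rw [mem_EofX]
    constructor
    · rintro ⟨w, hw, rfl⟩
      simpa [hX₀] using hw
    · intro he
      exact ⟨⟨e, hu₀ e he⟩, by simp [hX₀, he], rfl⟩
  have hCle : Cstar n k ≤ n.choose k := by
    have := card_EofX X₀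
    rw [hEX₀, hcard₀'] at this
    omega
  have hX₀card : X₀.card = n.choose k - Cstar n k := by
    have h1 := card_EofX X₀
    rw [hEX₀, hcard₀'] at h1
    have h2 : X₀.card ≤ n.choose k := by
      have := Finset.card_le_univ X₀
      rwa [Fintype.card_finset_len, Fintype.card_fin] at this
    omega
  -- the upper bound for an arbitrary TMV set
  have hbound : ∀ m ∈ {m | ∃ X : Finset (KVert n k),
      IsTotalMVSet (KneserGraph n k) ↑X ∧ X.card = m}, m ≤ n.choose k - Cstar n k := by
    rintro m ⟨X, hX, rfl⟩
    have h1 : Cstar n k ≤ (EofX X).card :=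
      Nat.sInf_le ⟨EofX X, EofX_uniform X, tmv_to_tau hk hn X hX, rfl⟩
    have h2 := card_EofX X
    have h3 : X.card ≤ n.choose k := by
      have := Finset.card_le_univ X
      rwa [Fintype.card_finset_len, Fintype.card_fin] at this
    omega
  rw [totalMVNumber]
  apply le_antisymm
  · exact csSup_le ⟨_, X₀, hX₀tmv, hX₀card⟩ hbound
  · exact le_csSup ⟨_, hbound⟩ ⟨X₀, hX₀tmv, hX₀card⟩
end

section
/- For integers n ≥ 2k² and k ≥ 2, the total mutual-visibility number of the Kneser graph KG(n,k) equals C(n,k) − 2k. -/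


lemma xvisible_self {V : Type*} (G : SimpleGraph V) (X : Set V) (u : V) :
    XVisible G X u u := by
  refine ⟨.nil, by simp [SimpleGraph.dist_self], ?_⟩
  simp

lemma xvisible_of_adj {V : Type*} {G : SimpleGraph V} (X : Set V) {u v : V}
    (h : G.Adj u v) : XVisible G X u v := by
  refine ⟨.cons h .nil, by simp [SimpleGraph.dist_eq_one_iff_adj.mpr h], ?_⟩
  intro w hw _
  simpa using hw

lemma dist_eq_two_of {V : Type*} {G : SimpleGraph V} {u v w : V}
    (hne : u ≠ v) (hna : ¬ G.Adj u v) (h1 : G.Adj u w) (h2 : G.Adj w v) :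
    G.dist u v = 2 := by
  have hle : G.dist u v ≤ 2 := by
    have := G.dist_le (SimpleGraph.Walk.cons h1 (SimpleGraph.Walk.cons h2 .nil))
    simpa using this
  have h0 : G.dist u v ≠ 0 := by
    intro h0
    exact hne ((SimpleGraph.Reachable.dist_eq_zero_iff ⟨SimpleGraph.Walk.cons h1 (SimpleGraph.Walk.cons h2 .nil)⟩).mp h0)
  have h1' : G.dist u v ≠ 1 := fun h => hna (SimpleGraph.dist_eq_one_iff_adj.mp h)
  omega

lemma xvisible_of_mid {V : Type*} {G : SimpleGraph V} {X : Set V} {u v w : V}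
    (hne : u ≠ v) (hna : ¬ G.Adj u v) (h1 : G.Adj u w) (h2 : G.Adj w v)
    (hw : w ∉ X) : XVisible G X u v := by
  refine ⟨.cons h1 (.cons h2 .nil), ?_, ?_⟩
  · simp [dist_eq_two_of hne hna h1 h2]
  · intro x hx hxX
    simp [SimpleGraph.Walk.support_cons] at hx
    rcases hx with rfl | rfl | rfl
    · exact Or.inl rfl
    · exact absurd hxX hw
    · exact Or.inr rfl

lemma exists_mid_of_xvisible {V : Type*} {G : SimpleGraph V} {X : Set V} {u v : V}
    (h : XVisible G X u v) (hne : u ≠ v) (hna : ¬ G.Adj u v) (hd : G.dist u v = 2) :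
    ∃ w, G.Adj u w ∧ G.Adj w v ∧ w ∉ X := by
  obtain ⟨p, hlen, hsup⟩ := h
  rw [hd] at hlen
  cases p with
  | nil => simp at hlen
  | cons h1 q =>
    cases q with
    | nil => simp at hlen
    | cons h2 r =>
      rename_i w _
      cases r with
      | nil =>
        refine ⟨w, h1, h2, fun hwX => ?_⟩
        have := hsup w (by simp) hwX
        rcases this with rfl | rfl
        · exact G.loopless.irrefl _ h1
        · exact G.loopless.irrefl _ h2
      | cons h3 r => simp at hlen



section blocks
variable {n k : ℕ}

lemma kblock_lt (hn : 2 * k ^ 2 ≤ n) (i : Fin (2 * k)) :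
    ∀ m ∈ Finset.Ico (i.1 * k) (i.1 * k + k), m < n := by
  intro m hm
  rw [Finset.mem_Ico] at hm
  have h1 : i.1 + 1 ≤ 2 * k := i.2
  have h2 : (i.1 + 1) * k ≤ 2 * k * k := Nat.mul_le_mul_right k h1
  have h3 : (i.1 + 1) * k = i.1 * k + k := by ring
  have h4 : 2 * k * k = 2 * k ^ 2 := by ring
  omega

def kblock (hn : 2 * k ^ 2 ≤ n) (i : Fin (2 * k)) : Finset (Fin n) :=
  Finset.attachFin (Finset.Ico (i.1 * k) (i.1 * k + k)) (kblock_lt hn i)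

lemma mem_kblock (hn : 2 * k ^ 2 ≤ n) {i : Fin (2 * k)} {x : Fin n} :
    x ∈ kblock hn i ↔ i.1 * k ≤ x.1 ∧ x.1 < i.1 * k + k := by
  simp [kblock, Finset.mem_attachFin, Finset.mem_Ico]

lemma kblock_card (hn : 2 * k ^ 2 ≤ n) (i : Fin (2 * k)) : (kblock hn i).card = k := by
  simp [kblock, Finset.card_attachFin]

lemma kblock_unique (hn : 2 * k ^ 2 ≤ n) (hk : 1 ≤ k) {i j : Fin (2 * k)} {x : Fin n}
    (hi : x ∈ kblock hn i) (hj : x ∈ kblock hn j) : i = j := by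
  rw [mem_kblock] at hi hj
  have e1 : (j.1 + 1) * k = j.1 * k + k := by ring
  have e2 : (i.1 + 1) * k = i.1 * k + k := by ring
  have h1 : i.1 * k < (j.1 + 1) * k := by omega
  have h2 : j.1 * k < (i.1 + 1) * k := by omega
  have h1' : i.1 < j.1 + 1 := lt_of_mul_lt_mul_right h1 (Nat.zero_le k)
  have h2' : j.1 < i.1 + 1 := lt_of_mul_lt_mul_right h2 (Nat.zero_le k)
  exact Fin.ext (by omega)

lemma exists_kblock_disjoint (hn : 2 * k ^ 2 ≤ n) (hk : 2 ≤ k) {S : Finset (Fin n)} (hS : S.card < 2 * k) :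
    ∃ i : Fin (2 * k), Disjoint (kblock hn i) S := by
  by_contra hcon
  push_neg at hcon
  have hne : ∀ i : Fin (2 * k), (kblock hn i ∩ S).Nonempty := fun i =>
    Finset.not_disjoint_iff_nonempty_inter.mp (hcon i)
  have hcard : (Finset.univ : Finset (Fin (2 * k))).card ≤ S.card := by
    apply Finset.card_le_card_of_injOn (fun i => (hne i).choose)
    · intro i _
      have := (hne i).choose_spec
      exact (Finset.mem_inter.mp this).2
    · intro i _ j _ hij
      have hi := (Finset.mem_inter.mp (hne i).choose_spec).1
      have hj := (Finset.mem_inter.mp (hne j).choose_spec).1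
      have hij' : (hne i).choose = (hne j).choose := hij
      rw [hij'] at hi
      exact kblock_unique hn (by omega) hi hj
  simp at hcard
  omega

lemma exists_disjoint_ksubset (hk : 2 ≤ k) (hn : 2 * k ^ 2 ≤ n) {S : Finset (Fin n)} (hS : S.card ≤ 2 * k - 1) :
    ∃ C : Finset (Fin n), C.card = k ∧ Disjoint C S := by
  have h1 : k ≤ Sᶜ.card := by
    rw [Finset.card_compl]
    simp only [Fintype.card_fin]
    have hk2 : 2 * k ^ 2 = 2 * (k * k) := by ring
    have h3 : 3 * k ≤ 2 * (k * k) := by nlinarith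
    omega
  obtain ⟨C, hCsub, hCcard⟩ := Finset.exists_subset_card_eq h1
  exact ⟨C, hCcard, Finset.disjoint_left.mpr fun x hx =>
    Finset.mem_compl.mp (hCsub hx)⟩
end blocks

lemma kneser_adj_of_disjoint {n k : ℕ} (hk : 1 ≤ k)
    {u v : {A : Finset (Fin n) // A.card = k}} (h : Disjoint u.1 v.1) :
    (KneserGraph n k).Adj u v := by
  refine (⟨?_, h⟩ : u ≠ v ∧ Disjoint u.1 v.1)
  rintro rfl
  have h0 : u.1 = ⊥ := disjoint_self.mp h
  have := u.2
  rw [h0] at this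
  simp at this
  omega


section MainProof
variable {n k : ℕ}

lemma kblock_inj (hn : 2 * k ^ 2 ≤ n) (hk : 1 ≤ k) :
    Function.Injective (fun i : Fin (2 * k) =>
      (⟨kblock hn i, kblock_card hn i⟩ : {A : Finset (Fin n) // A.card = k})) := by
  intro i j hij
  have hij' : kblock hn i = kblock hn j := congrArg Subtype.val hij
  have hlt : i.1 * k < n := kblock_lt hn i (i.1 * k) (by rw [Finset.mem_Ico]; omega)
  have hx : (⟨i.1 * k, hlt⟩ : Fin n) ∈ kblock hn i := by
    rw [mem_kblock]
    refine ⟨le_of_eq rfl, ?_⟩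
    show i.1 * k < i.1 * k + k
    omega
  have hx' : (⟨i.1 * k, hlt⟩ : Fin n) ∈ kblock hn j := hij' ▸ hx
  exact kblock_unique hn hk hx hx'

/-- For `n ≥ 2k²` and `k ≥ 2`, the total mutual-visibility number of
`KG(n,k)` equals `C(n,k) - 2k`. -/
theorem kneser_totalMVNumber_large_n (n k : ℕ) (hk : 2 ≤ k) (hn : 2 * k ^ 2 ≤ n) :
    totalMVNumber (KneserGraph n k) = n.choose k - 2 * k := by
  classical
  set G := KneserGraph n k with hG
  have hVcard : Fintype.card {A : Finset (Fin n) // A.card = k} = n.choose k := by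
    simpa using Fintype.card_finset_len (α := Fin n) k
  have hne1 : ∀ A : {A : Finset (Fin n) // A.card = k}, A.1.Nonempty := fun A =>
    Finset.card_pos.mp (by rw [A.2]; omega)
  -- The lower bound construction
  set Y0 : Finset {A : Finset (Fin n) // A.card = k} :=
    Finset.image (fun i : Fin (2 * k) => ⟨kblock hn i, kblock_card hn i⟩) Finset.univ with hY0
  have hY0card : Y0.card = 2 * k := by
    rw [hY0, Finset.card_image_of_injective _ (kblock_inj hn (by omega))]
    simp
  have hXcard : (Y0ᶜ : Finset _).card = n.choose k - 2 * k := by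
    rw [Finset.card_compl, hY0card, hVcard]
  have hXtotal : IsTotalMVSet G ↑(Y0ᶜ : Finset _) := by
    intro u v
    by_cases huv : u = v
    · subst huv; exact xvisible_self G _ u
    by_cases hadj : G.Adj u v
    · exact xvisible_of_adj _ hadj
    -- u ≠ v, not adjacent, so not disjoint
    have hnd : ¬ Disjoint u.1 v.1 := fun hd => hadj (⟨huv, hd⟩ : u ≠ v ∧ Disjoint u.1 v.1)
    have hScard : (u.1 ∪ v.1).card < 2 * k := by
      have h1 := Finset.card_union_add_card_inter u.1 v.1
      have h2 : (u.1 ∩ v.1).Nonempty := Finset.not_disjoint_iff_nonempty_inter.mp hnd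
      have h3 : 1 ≤ (u.1 ∩ v.1).card := Finset.card_pos.mpr h2
      rw [u.2, v.2] at h1
      omega
    obtain ⟨i, hi⟩ := exists_kblock_disjoint hn hk (Nat.lt_of_lt_of_le hScard (le_refl _))
    rw [Finset.disjoint_union_right] at hi
    set w : {A : Finset (Fin n) // A.card = k} := ⟨kblock hn i, kblock_card hn i⟩ with hw
    have hadj1 : G.Adj u w :=
      (kneser_adj_of_disjoint (by omega) (show Disjoint w.1 u.1 from hi.1)).symm
    have hadj2 : G.Adj w v :=
      kneser_adj_of_disjoint (by omega) (show Disjoint w.1 v.1 from hi.2)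
    have hwY0 : w ∈ Y0 := by
      rw [hY0, Finset.mem_image]
      exact ⟨i, Finset.mem_univ i, rfl⟩
    have hwX : w ∉ (↑(Y0ᶜ : Finset _) : Set _) := by
      simp [hwY0]
    exact xvisible_of_mid huv hadj hadj1 hadj2 hwX
  -- The upper bound
  have hupper : ∀ m ∈ {m | ∃ X : Finset {A : Finset (Fin n) // A.card = k},
      IsTotalMVSet G ↑X ∧ X.card = m}, m ≤ n.choose k - 2 * k := by
    rintro m ⟨X, hX, rfl⟩
    by_contra hcon
    push_neg at hcon
    set Y := Xᶜ with hY
    have hYcard : Y.card ≤ 2 * k - 1 := by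
      have h1 : Y.card = Fintype.card _ - X.card := Finset.card_compl X
      have h2 : X.card ≤ Fintype.card {A : Finset (Fin n) // A.card = k} :=
        Finset.card_le_univ X
      rw [hVcard] at h1 h2
      omega
    -- transversal
    set T : Finset (Fin n) := Y.image (fun A => (hne1 A).choose) with hT
    have hTcard : T.card ≤ 2 * k - 1 := le_trans (Finset.card_image_le) hYcard
    obtain ⟨T', hTT', hT'card⟩ := Finset.exists_superset_card_eq hTcard
      (by
        rw [Fintype.card_fin]
        have h5 : 2 * k ≤ 2 * k ^ 2 := by nlinarith
        omega)
    obtain ⟨A, hAsub, hAcard⟩ := Finset.exists_subset_card_eq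
      (show k ≤ T'.card by omega)
    set R : Finset (Fin n) := T' \ A with hR
    have hRcard : R.card = k - 1 := by
      rw [hR, Finset.card_sdiff_of_subset hAsub, hT'card, hAcard]; omega
    have hAne : A.Nonempty := Finset.card_pos.mp (by omega)
    obtain ⟨a, ha⟩ := hAne
    have haR : a ∉ R := by rw [hR]; simp [ha]
    set B : Finset (Fin n) := insert a R with hB
    have hBcard : B.card = k := by
      rw [hB, Finset.card_insert_of_notMem haR, hRcard]; omega
    set u : {A : Finset (Fin n) // A.card = k} := ⟨A, hAcard⟩ with hu
    set v : {A : Finset (Fin n) // A.card = k} := ⟨B, hBcard⟩ with hv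
    have hRne : R.Nonempty := Finset.card_pos.mp (by omega)
    obtain ⟨b, hb⟩ := hRne
    have hbB : b ∈ B := by rw [hB]; exact Finset.mem_insert_of_mem hb
    have hbA : b ∉ A := by
      rw [hR] at hb; exact (Finset.mem_sdiff.mp hb).2
    have huv : u ≠ v := by
      intro h
      have : A = B := congrArg Subtype.val h
      rw [this] at hbA; exact hbA hbB
    have hna : ¬ G.Adj u v := by
      intro h
      exact (Finset.disjoint_left.mp (h : u ≠ v ∧ Disjoint u.1 v.1).2 ha (Finset.mem_insert_self a R))
    have hunion : A ∪ B = T' := by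
      rw [hB, Finset.union_insert, Finset.insert_eq_self.mpr (Finset.mem_union_left R ha),
        hR, Finset.union_sdiff_of_subset hAsub]
    -- distance is two
    obtain ⟨C, hCcard, hCdisj⟩ := exists_disjoint_ksubset hk hn
      (show T'.card ≤ 2 * k - 1 by omega)
    set w0 : {A : Finset (Fin n) // A.card = k} := ⟨C, hCcard⟩ with hw0
    have hCA : Disjoint C A := hCdisj.mono_right (by rw [← hunion]; exact Finset.subset_union_left)
    have hCB : Disjoint C B := hCdisj.mono_right (by rw [← hunion]; exact Finset.subset_union_right)
    have hadj1 : G.Adj u w0 := (kneser_adj_of_disjoint (by omega) hCA).symm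
    have hadj2 : G.Adj w0 v := kneser_adj_of_disjoint (by omega) hCB
    have hdist : G.dist u v = 2 := dist_eq_two_of huv hna hadj1 hadj2
    obtain ⟨w, hwu, hwv, hwX⟩ := exists_mid_of_xvisible (hX u v) huv hna hdist
    have hwY : w ∈ Y := by
      rw [hY, Finset.mem_compl]
      intro hmem
      exact hwX hmem
    -- contradiction via the transversal
    have htw : (hne1 w).choose ∈ T := by
      rw [hT, Finset.mem_image]
      exact ⟨w, hwY, rfl⟩
    have htw' : (hne1 w).choose ∈ A ∪ B := by
      rw [hunion]; exact hTT' htw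
    have hdisjw : Disjoint w.1 (A ∪ B) := by
      rw [Finset.disjoint_union_right]
      exact ⟨(hwu : u ≠ w ∧ Disjoint u.1 w.1).2.symm, (hwv : w ≠ v ∧ Disjoint w.1 v.1).2⟩
    exact Finset.disjoint_left.mp hdisjw (hne1 w).choose_spec htw'
  -- conclude
  have hlowmem : n.choose k - 2 * k ∈ {m | ∃ X : Finset {A : Finset (Fin n) // A.card = k},
      IsTotalMVSet G ↑X ∧ X.card = m} := ⟨Y0ᶜ, hXtotal, hXcard⟩
  rw [totalMVNumber]
  exact le_antisymm (csSup_le ⟨_, hlowmem⟩ hupper)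
    (le_csSup ⟨n.choose k - 2 * k, hupper⟩ hlowmem)
end MainProof
end

section
/- If 2k+1 ≤ n ≤ 3k and k ≥ 2, then the total mutual-visibility number of the bipartite Kneser graph H(n,k) equals 0. -/
/-- The bipartite Kneser graph `H(n,k)`: vertices are the `k`-subsets and
`(n-k)`-subsets of `[n]`, a `k`-set being adjacent to the `(n-k)`-sets
containing it. -/
def BipKneserGraph (n k : ℕ) :
    SimpleGraph {S : Finset (Fin n) // S.card = k ∨ S.card = n - k} where
  Adj S T := S ≠ T ∧ (S.1 ⊆ T.1 ∨ T.1 ⊆ S.1)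
  symm := ⟨fun S T h => ⟨h.1.symm, h.2.symm⟩⟩
  loopless := ⟨fun S h => h.1 rfl⟩

/-- If some vertex `x ∈ X` is the unique middle vertex of every shortest path
between two nonadjacent distinct vertices `u, v`, then `X` is not a total
mutual-visibility set. -/
lemma vispair_false {V : Type*} {G : SimpleGraph V} {X : Set V}
    (h : IsTotalMVSet G X) {u v x : V} (hx : x ∈ X)
    (hxu : x ≠ u) (hxv : x ≠ v) (huv : u ≠ v) (hnadj : ¬ G.Adj u v)
    (hux : G.Adj u x) (hxv2 : G.Adj x v)
    (huniq : ∀ c, G.Adj u c → G.Adj c v → c = x) : False := by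
  classical
  have hreach : G.Reachable u v :=
    ⟨SimpleGraph.Walk.cons hux (SimpleGraph.Walk.cons hxv2 SimpleGraph.Walk.nil)⟩
  have hdle : G.dist u v ≤ 2 := by
    have := SimpleGraph.dist_le
      (SimpleGraph.Walk.cons hux (SimpleGraph.Walk.cons hxv2 SimpleGraph.Walk.nil))
    simpa using this
  have hd0 : 0 < G.dist u v := hreach.pos_dist_of_ne huv
  have hd1 : G.dist u v ≠ 1 := fun h1 => hnadj (SimpleGraph.dist_eq_one_iff_adj.mp h1)
  have hd2 : G.dist u v = 2 := by omega
  obtain ⟨p, hplen, hpsupp⟩ := h u v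
  rw [hd2] at hplen
  have hadj1 : G.Adj u (p.getVert 1) := by
    have := p.adj_getVert_succ (i := 0) (by omega)
    simpa using this
  have hadj2 : G.Adj (p.getVert 1) v := by
    have := p.adj_getVert_succ (i := 1) (by omega)
    have h2 : p.getVert 2 = v := by
      have := p.getVert_length
      rw [hplen] at this
      exact this
    rwa [h2] at this
  have hcx : p.getVert 1 = x := huniq _ hadj1 hadj2
  have hcs : p.getVert 1 ∈ p.support :=
    SimpleGraph.Walk.mem_support_iff_exists_getVert.mpr ⟨1, rfl, by omega⟩
  rw [hcx] at hcs
  rcases hpsupp x hcs hx with h' | h'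
  · exact hxu h'
  · exact hxv h'

lemma bipKneser_tmv_empty (n k : ℕ) (hk : 2 ≤ k)
    (h1 : 2 * k + 1 ≤ n) (h2 : n ≤ 3 * k)
    (X : Set {S : Finset (Fin n) // S.card = k ∨ S.card = n - k})
    (hX : IsTotalMVSet (BipKneserGraph n k) X) : X = ∅ := by
  classical
  by_contra hne
  obtain ⟨x, hx⟩ := Set.nonempty_iff_ne_empty.mpr hne
  obtain ⟨A, hor⟩ := x
  rcases hor with hxk | hxnk
  · -- x is a k-set A; take B1, B2 ⊇ A with B1 ∩ B2 = A
    have hAc : Aᶜ.card = n - k := by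
      rw [Finset.card_compl, hxk]; simp
    obtain ⟨C1, hC1sub, hC1card⟩ := Finset.exists_subset_card_eq
      (s := Aᶜ) (n := n - 2 * k) (by omega)
    have hsd : (Aᶜ \ C1).card = k := by
      rw [Finset.card_sdiff_of_subset hC1sub, hAc, hC1card]; omega
    obtain ⟨C2, hC2sub, hC2card⟩ := Finset.exists_subset_card_eq
      (s := Aᶜ \ C1) (n := n - 2 * k) (by omega)
    have hC1A : Disjoint A C1 := by
      rw [Finset.disjoint_right]
      intro a ha
      exact Finset.mem_compl.mp (hC1sub ha)
    have hC2A : Disjoint A C2 := by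
      rw [Finset.disjoint_right]
      intro a ha
      exact Finset.mem_compl.mp ((Finset.sdiff_subset) (hC2sub ha))
    have hC12 : Disjoint C1 C2 := by
      rw [Finset.disjoint_right]
      intro a ha
      exact (Finset.mem_sdiff.mp (hC2sub ha)).2
    have hB1card : (A ∪ C1).card = n - k := by
      rw [Finset.card_union_of_disjoint hC1A, hxk, hC1card]; omega
    have hB2card : (A ∪ C2).card = n - k := by
      rw [Finset.card_union_of_disjoint hC2A, hxk, hC2card]; omega
    have hinter : (A ∪ C1) ∩ (A ∪ C2) = A := by
      ext a
      simp only [Finset.mem_inter, Finset.mem_union]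
      constructor
      · rintro ⟨h1' | h1', h2' | h2'⟩
        · exact h1'
        · exact h1'
        · exact h2'
        · exact absurd h2' (Finset.disjoint_left.mp hC12 h1')
      · intro ha; exact ⟨Or.inl ha, Or.inl ha⟩
    have hxu : (⟨A, Or.inl hxk⟩ : {S : Finset (Fin n) // S.card = k ∨ S.card = n - k}) ≠
        ⟨A ∪ C1, Or.inr hB1card⟩ := by
      intro e
      rw [Subtype.mk.injEq] at e
      have := congrArg Finset.card e
      rw [hxk, hB1card] at this; omega
    have hxv : (⟨A, Or.inl hxk⟩ : {S : Finset (Fin n) // S.card = k ∨ S.card = n - k}) ≠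
        ⟨A ∪ C2, Or.inr hB2card⟩ := by
      intro e
      rw [Subtype.mk.injEq] at e
      have := congrArg Finset.card e
      rw [hxk, hB2card] at this; omega
    have huv : (⟨A ∪ C1, Or.inr hB1card⟩ : {S : Finset (Fin n) // S.card = k ∨ S.card = n - k}) ≠
        ⟨A ∪ C2, Or.inr hB2card⟩ := by
      intro e
      rw [Subtype.mk.injEq] at e
      have hAe : A = A ∪ C1 := by
        conv_lhs => rw [← hinter, ← e, Finset.inter_self]
      have := congrArg Finset.card hAe
      rw [hxk, hB1card] at this; omega
    have hnadj : ¬ (BipKneserGraph n k).Adj ⟨A ∪ C1, Or.inr hB1card⟩ ⟨A ∪ C2, Or.inr hB2card⟩ := by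
      rintro ⟨hne', hsub | hsub⟩
      · exact hne' (Subtype.ext (Finset.eq_of_subset_of_card_le hsub
          (by rw [hB1card, hB2card])))
      · exact hne' (Subtype.ext (Finset.eq_of_subset_of_card_le hsub
          (by rw [hB1card, hB2card])).symm)
    refine vispair_false hX hx hxu hxv huv hnadj ⟨Ne.symm hxu, Or.inr Finset.subset_union_left⟩
      ⟨hxv, Or.inl Finset.subset_union_left⟩ ?_
    rintro c ⟨hcu, hcu'⟩ ⟨hcv, hcv'⟩
    rcases c.2 with hck | hcnk
    · -- c is a k-set, contained in both
      have hc1 : c.1 ⊆ A ∪ C1 := by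
        rcases hcu' with h' | h'
        · exfalso
          have := Finset.card_le_card h'
          rw [hB1card, hck] at this
          omega
        · exact h'
      have hc2 : c.1 ⊆ A ∪ C2 := by
        rcases hcv' with h' | h'
        · exact h'
        · exfalso
          have := Finset.card_le_card h'
          rw [hB2card, hck] at this
          omega
      have hca : c.1 ⊆ A := by
        rw [← hinter]; exact Finset.subset_inter hc1 hc2
      exact Subtype.ext (Finset.eq_of_subset_of_card_le hca (by rw [hck, hxk]))
    · -- c is an (n-k)-set, so it equals u : contradiction
      exfalso
      rcases hcu' with h' | h'
      · exact hcu (Subtype.ext (Finset.eq_of_subset_of_card_le h'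
          (by rw [hB1card, hcnk])))
      · exact hcu (Subtype.ext (Finset.eq_of_subset_of_card_le h'
          (by rw [hB1card, hcnk])).symm)
  · -- x is an (n-k)-set B; take A1, A2 ⊆ B with A1 ∪ A2 = B
    obtain ⟨A1, hA1sub, hA1card⟩ := Finset.exists_subset_card_eq
      (s := A) (n := k) (by rw [hxnk]; omega)
    obtain ⟨D, hDsub, hDcard⟩ := Finset.exists_subset_card_eq
      (s := A1) (n := 3 * k - n) (by rw [hA1card]; omega)
    have hBA1 : (A \ A1).card = n - 2 * k := by
      rw [Finset.card_sdiff_of_subset hA1sub, hxnk, hA1card]; omega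
    have hdisj : Disjoint (A \ A1) D := by
      rw [Finset.disjoint_right]
      intro a ha
      exact fun h' => (Finset.mem_sdiff.mp h').2 (hDsub ha)
    have hA2card : ((A \ A1) ∪ D).card = k := by
      rw [Finset.card_union_of_disjoint hdisj, hBA1, hDcard]; omega
    have hA2sub : (A \ A1) ∪ D ⊆ A :=
      Finset.union_subset Finset.sdiff_subset (hDsub.trans hA1sub)
    have hunion : A1 ∪ ((A \ A1) ∪ D) = A := by
      rw [← Finset.union_assoc, Finset.union_sdiff_of_subset hA1sub,
        Finset.union_eq_left.mpr (hDsub.trans hA1sub)]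
    have hxu : (⟨A, Or.inr hxnk⟩ : {S : Finset (Fin n) // S.card = k ∨ S.card = n - k}) ≠
        ⟨A1, Or.inl hA1card⟩ := by
      intro e
      rw [Subtype.mk.injEq] at e
      have := congrArg Finset.card e
      rw [hxnk, hA1card] at this; omega
    have hxv : (⟨A, Or.inr hxnk⟩ : {S : Finset (Fin n) // S.card = k ∨ S.card = n - k}) ≠
        ⟨(A \ A1) ∪ D, Or.inl hA2card⟩ := by
      intro e
      rw [Subtype.mk.injEq] at e
      have := congrArg Finset.card e
      rw [hxnk, hA2card] at this; omega
    have huv : (⟨A1, Or.inl hA1card⟩ : {S : Finset (Fin n) // S.card = k ∨ S.card = n - k}) ≠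
        ⟨(A \ A1) ∪ D, Or.inl hA2card⟩ := by
      intro e
      rw [Subtype.mk.injEq] at e
      have hAe : A1 = A := by rw [← hunion, ← e, Finset.union_self]
      have := congrArg Finset.card hAe
      rw [hA1card, hxnk] at this; omega
    have hnadj : ¬ (BipKneserGraph n k).Adj ⟨A1, Or.inl hA1card⟩
        ⟨(A \ A1) ∪ D, Or.inl hA2card⟩ := by
      rintro ⟨hne', hsub | hsub⟩
      · exact hne' (Subtype.ext (Finset.eq_of_subset_of_card_le hsub
          (by rw [hA1card, hA2card])))
      · exact hne' (Subtype.ext (Finset.eq_of_subset_of_card_le hsub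
          (by rw [hA1card, hA2card])).symm)
    refine vispair_false hX hx hxu hxv huv hnadj ⟨Ne.symm hxu, Or.inl hA1sub⟩
      ⟨hxv, Or.inr hA2sub⟩ ?_
    rintro c ⟨hcu, hcu'⟩ ⟨hcv, hcv'⟩
    rcases c.2 with hck | hcnk
    · -- c is a k-set; either containment with A1 gives c = u, contradiction
      exfalso
      rcases hcu' with h' | h'
      · exact hcu (Subtype.ext (Finset.eq_of_subset_of_card_le h'
          (by rw [hA1card, hck])))
      · exact hcu (Subtype.ext (Finset.eq_of_subset_of_card_le h'
          (by rw [hA1card, hck])).symm)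
    · -- c is an (n-k)-set containing both A1 and A2, hence c = B = x
      have h1' : A1 ⊆ c.1 := by
        rcases hcu' with h' | h'
        · exact h'
        · exfalso
          have := Finset.card_le_card h'
          rw [hcnk, hA1card] at this
          omega
      have h2' : (A \ A1) ∪ D ⊆ c.1 := by
        rcases hcv' with h' | h'
        · exfalso
          have := Finset.card_le_card h'
          rw [hcnk, hA2card] at this
          omega
        · exact h'
      have hBc : A ⊆ c.1 := by
        rw [← hunion]; exact Finset.union_subset h1' h2'
      exact Subtype.ext (Finset.eq_of_subset_of_card_le hBc (by rw [hcnk, hxnk])).symm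

/-- If `2k + 1 ≤ n ≤ 3k` and `k ≥ 2`, the total mutual-visibility number of
`H(n,k)` is `0`. -/
theorem bipKneser_totalMVNumber_eq_zero (n k : ℕ) (hk : 2 ≤ k)
    (h1 : 2 * k + 1 ≤ n) (h2 : n ≤ 3 * k) :
    totalMVNumber (BipKneserGraph n k) = 0 := by
  classical
  rw [totalMVNumber]
  have hsub : {m | ∃ X : Finset {S : Finset (Fin n) // S.card = k ∨ S.card = n - k},
      IsTotalMVSet (BipKneserGraph n k) ↑X ∧ X.card = m} ⊆ {0} := by
    rintro m ⟨X, hX, hcard⟩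
    have hXe : (X : Set _) = ∅ := bipKneser_tmv_empty n k hk h1 h2 _ hX
    have hX0 : X = ∅ := by
      ext a
      simp only [Finset.notMem_empty, iff_false]
      intro ha
      have : a ∈ (X : Set _) := ha
      rw [hXe] at this
      exact this
    simp [← hcard, hX0]
  rcases Set.subset_singleton_iff_eq.mp hsub with h' | h'
  · rw [h']; exact csSup_empty
  · rw [h']; exact csSup_singleton 0
end

section
/- For n ≥ 4, the mutual-visibility number of the Johnson graph J(n,2) equals ⌊n²/3⌋. -/
/-- The Johnson graph `J(n,k)`: vertices are the `k`-subsets of `[n]`,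
adjacent iff their intersection has `k - 1` elements. -/
def JohnsonGraph (n k : ℕ) : SimpleGraph {A : Finset (Fin n) // A.card = k} where
  Adj A B := A ≠ B ∧ (A.1 ∩ B.1).card = k - 1
  symm := ⟨fun A B h => ⟨h.1.symm, by rw [Finset.inter_comm]; exact h.2⟩⟩
  loopless := ⟨fun A h => h.1 rfl⟩


open Finset

namespace JohnsonMV

lemma count_mod3 (r : ℕ) (hr : r < 3) (n : ℕ) :
    ((range n).filter (fun i => i % 3 = r)).card = (n - r + 2) / 3 := by
  induction n with
  | zero => simp
  | succ n ih =>
    rw [range_add_one, filter_insert]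
    by_cases h : n % 3 = r
    · rw [if_pos h, card_insert_of_notMem (by simp)]; omega
    · rw [if_neg h, ih]; omega

lemma arith3 (n : ℕ) : (n + 1) ^ 2 / 3 = n ^ 2 / 3 + (n - n / 3) := by
  obtain ⟨q, r, hr, rfl⟩ : ∃ q r, r < 3 ∧ n = 3 * q + r :=
    ⟨n / 3, n % 3, Nat.mod_lt _ (by norm_num), by omega⟩
  interval_cases r
  · have a : (3 * q + 0 + 1) ^ 2 = 3 * (3 * (q * q) + 2 * q) + 1 := by ring
    have b : (3 * q + 0) ^ 2 = 3 * (3 * (q * q)) := by ring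
    rw [a, b]; generalize q * q = t; omega
  · have a : (3 * q + 1 + 1) ^ 2 = 3 * (3 * (q * q) + 4 * q + 1) + 1 := by ring
    have b : (3 * q + 1) ^ 2 = 3 * (3 * (q * q) + 2 * q) + 1 := by ring
    rw [a, b]; generalize q * q = t; omega
  · have a : (3 * q + 2 + 1) ^ 2 = 3 * (3 * (q * q) + 6 * q + 3) := by ring
    have b : (3 * q + 2) ^ 2 = 3 * (3 * (q * q) + 4 * q + 1) + 1 := by ring
    rw [a, b]; generalize q * q = t; omega

def Spairs (n : ℕ) : Finset (ℕ × ℕ) :=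
  (range n ×ˢ range n).filter (fun p => p.1 < p.2 ∧ p.1 % 3 ≠ p.2 % 3)

lemma Spairs_succ (n : ℕ) :
    Spairs (n + 1) = Spairs n ∪ ((range n).filter (fun i => i % 3 ≠ n % 3)).image (fun i => (i, n)) := by
  ext ⟨i, j⟩
  simp only [Spairs, mem_filter, mem_product, mem_range, mem_union, mem_image]
  constructor
  · rintro ⟨⟨hi, hj⟩, hij, hmod⟩
    by_cases hjn : j = n
    · right; exact ⟨i, ⟨by omega, by rw [← hjn]; exact hmod⟩, by rw [hjn]⟩
    · left; exact ⟨⟨by omega, by omega⟩, hij, hmod⟩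
  · rintro (⟨⟨hi, hj⟩, hij, hmod⟩ | ⟨a, ⟨ha, hmod⟩, heq⟩)
    · exact ⟨⟨by omega, by omega⟩, hij, hmod⟩
    · obtain ⟨rfl, rfl⟩ := Prod.mk.injEq .. ▸ heq
      exact ⟨⟨by omega, by omega⟩, by omega, hmod⟩

lemma card_Spairs (n : ℕ) : (Spairs n).card = n ^ 2 / 3 := by
  induction n with
  | zero => simp [Spairs]
  | succ n ih =>
    rw [Spairs_succ, card_union_of_disjoint, ih, card_image_of_injective _ (fun a b h => (Prod.mk.injEq .. ▸ h).1)]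
    · have h1 : ((range n).filter (fun i => i % 3 ≠ n % 3)).card = n - n / 3 := by
        have h2 := count_mod3 (n % 3) (Nat.mod_lt _ (by norm_num)) n
        have h3 := card_filter_add_card_filter_not (s := range n)
          (p := fun i => i % 3 = n % 3)
        rw [card_range] at h3
        simp only [ne_eq] at h3 ⊢
        omega
      rw [h1, arith3]
    · rw [disjoint_right]
      rintro ⟨i, j⟩ hmem hS
      simp only [mem_image, mem_filter, mem_range] at hmem
      obtain ⟨a, ⟨ha, _⟩, heq⟩ := hmem
      obtain ⟨rfl, rfl⟩ := Prod.mk.injEq .. ▸ heq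
      simp only [Spairs, mem_filter, mem_product, mem_range] at hS
      omega

variable {α : Type*} [DecidableEq α]

lemma remove_step (s T : Finset α) (E : Finset (Finset α))
    (hedge : ∀ e ∈ E, ∃ x y, x ≠ y ∧ x ∈ s ∧ y ∈ s ∧ e = {x, y})
    (hfib : ∀ w ∈ s \ T, ∃ t ∈ T, ({t, w} : Finset α) ∉ E) :
    E.card ≤ (E.filter (fun e => ∀ z ∈ e, z ∉ T)).card
      + T.card.choose 2 + (T.card - 1) * (s \ T).card := by
  classical
  set s' := s \ T with hs'
  set E' := E.filter (fun e => ∀ z ∈ e, z ∉ T) with hE'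
  set Esub := E.filter (fun e => e ⊆ T) with hEsub
  set Ecross := E.filter (fun e => (∃ z ∈ e, z ∈ T) ∧ ¬ e ⊆ T) with hEcross
  have hsplit : E ⊆ E' ∪ Esub ∪ Ecross := by
    intro e he
    by_cases h1 : ∀ z ∈ e, z ∉ T
    · exact mem_union_left _ (mem_union_left _ (mem_filter.mpr ⟨he, h1⟩))
    · push_neg at h1
      by_cases h2 : e ⊆ T
      · exact mem_union_left _ (mem_union_right _ (mem_filter.mpr ⟨he, h2⟩))
      · exact mem_union_right _ (mem_filter.mpr ⟨he, h1, h2⟩)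
  have hsub_card : Esub.card ≤ T.card.choose 2 := by
    rw [← card_powersetCard 2 T]
    apply card_le_card
    intro e he
    rw [mem_filter] at he
    obtain ⟨x, y, hxy, _, _, rfl⟩ := hedge e he.1
    exact mem_powersetCard.mpr ⟨he.2, card_pair hxy⟩
  have hcross_card : Ecross.card ≤ (T.card - 1) * s'.card := by
    have hone : ∀ e ∈ Ecross, ∃ t w, t ∈ T ∧ w ∈ s' ∧ e = {t, w} ∧ e \ T = {w} := by
      intro e he
      rw [mem_filter] at he
      obtain ⟨he, hz, hns⟩ := he
      obtain ⟨x, y, hxy, hxs, hys, rfl⟩ := hedge e he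
      by_cases hxT : x ∈ T
      · have hyT : y ∉ T := fun hyT => hns (insert_subset hxT (singleton_subset_iff.mpr hyT))
        refine ⟨x, y, hxT, mem_sdiff.mpr ⟨hys, hyT⟩, rfl, ?_⟩
        ext z
        simp only [mem_sdiff, mem_insert, mem_singleton]
        constructor
        · rintro ⟨rfl | rfl, hzT⟩
          · exact absurd hxT hzT
          · rfl
        · rintro rfl; exact ⟨Or.inr rfl, hyT⟩
      · obtain ⟨z, hz1, hz2⟩ := hz
        have hyT : y ∈ T := by
          rcases mem_insert.mp hz1 with rfl | h
          · exact absurd hz2 hxT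
          · rwa [mem_singleton.mp h] at hz2
        refine ⟨y, x, hyT, mem_sdiff.mpr ⟨hxs, hxT⟩, pair_comm x y, ?_⟩
        ext u
        simp only [mem_sdiff, mem_insert, mem_singleton]
        constructor
        · rintro ⟨rfl | rfl, huT⟩
          · rfl
          · exact absurd hyT huT
        · rintro rfl; exact ⟨Or.inl rfl, hxT⟩
    have H : ∀ e ∈ Ecross, e \ T ∈ s'.image (fun w => ({w} : Finset α)) := by
      intro e he
      obtain ⟨t, w, _, hw, _, hdiff⟩ := hone e he
      exact mem_image.mpr ⟨w, hw, hdiff.symm⟩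
    rw [card_eq_sum_card_fiberwise H]
    calc ∑ W ∈ s'.image (fun w => ({w} : Finset α)),
          (Ecross.filter (fun e => e \ T = W)).card
        ≤ ∑ _W ∈ s'.image (fun w => ({w} : Finset α)), (T.card - 1) := by
          apply sum_le_sum
          intro W hW
          obtain ⟨w, hw, rfl⟩ := mem_image.mp hW
          -- fiber over {w}
          have hFsub : Ecross.filter (fun e => e \ T = {w})
              ⊆ T.image (fun t => ({t, w} : Finset α)) := by
            intro e he
            rw [mem_filter] at he
            obtain ⟨t, w', htT, hw', heq, hdiff⟩ := hone e he.1
            have : w' = w := by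
              have := he.2
              rw [hdiff] at this
              exact singleton_injective this
            subst this
            exact mem_image.mpr ⟨t, htT, heq.symm⟩
          obtain ⟨t, htT, htE⟩ := hfib w hw
          have htF : ({t, w} : Finset α) ∉ Ecross.filter (fun e => e \ T = {w}) := by
            intro h
            exact htE (filter_subset _ _ (filter_subset _ _ h))
          have hmemim : ({t, w} : Finset α) ∈ T.image (fun t => ({t, w} : Finset α)) :=
            mem_image.mpr ⟨t, htT, rfl⟩
          have hsub2 : Ecross.filter (fun e => e \ T = {w})
              ⊆ (T.image (fun t => ({t, w} : Finset α))).erase {t, w} := by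
            intro e he
            exact mem_erase.mpr ⟨fun h => htF (h ▸ he), hFsub he⟩
          calc (Ecross.filter (fun e => e \ T = {w})).card
              ≤ ((T.image (fun t => ({t, w} : Finset α))).erase {t, w}).card :=
                card_le_card hsub2
            _ = (T.image (fun t => ({t, w} : Finset α))).card - 1 :=
                card_erase_of_mem hmemim
            _ ≤ T.card - 1 := Nat.sub_le_sub_right card_image_le 1
      _ = (s'.image (fun w => ({w} : Finset α))).card * (T.card - 1) := by
          rw [sum_const, smul_eq_mul]
      _ ≤ (T.card - 1) * s'.card := by
          rw [mul_comm]
          exact Nat.mul_le_mul_left _ card_image_le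
  calc E.card ≤ (E' ∪ Esub ∪ Ecross).card := card_le_card hsplit
    _ ≤ (E' ∪ Esub).card + Ecross.card := card_union_le _ _
    _ ≤ E'.card + Esub.card + Ecross.card := by
        exact Nat.add_le_add_right (card_union_le _ _) _
    _ ≤ E'.card + T.card.choose 2 + (T.card - 1) * s'.card := by
        omega

def K4Free (E : Finset (Finset α)) : Prop :=
  ∀ a b c d : α, a ≠ b → a ≠ c → a ≠ d → b ≠ c → b ≠ d → c ≠ d →
    ({a, b} : Finset α) ∈ E → ({c, d} : Finset α) ∈ E →
    ({a, c} : Finset α) ∈ E → ({a, d} : Finset α) ∈ E →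
    ({b, c} : Finset α) ∈ E → ({b, d} : Finset α) ∈ E → False


lemma turan_aux (N : ℕ) : ∀ (s : Finset α) (E : Finset (Finset α)), s.card = N →
    (∀ e ∈ E, ∃ x y, x ≠ y ∧ x ∈ s ∧ y ∈ s ∧ e = {x, y}) →
    K4Free E → E.card ≤ N ^ 2 / 3 := by
  induction N using Nat.strong_induction_on with
  | _ N ih =>
  intro s E hcard hedge hK4
  rcases eq_empty_or_nonempty E with rfl | ⟨e₀, he₀⟩
  · simp
  obtain ⟨x, y, hxy, hxs, hys, he₀eq⟩ := hedge e₀ he₀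
  subst he₀eq
  -- helper for filtered instance
  have hsub_inherit : ∀ (T : Finset α),
      (∀ e ∈ E.filter (fun e => ∀ z ∈ e, z ∉ T), ∃ a b, a ≠ b ∧ a ∈ s \ T ∧ b ∈ s \ T ∧ e = {a, b}) := by
    intro T e he
    rw [mem_filter] at he
    obtain ⟨a, b, hab, has, hbs, rfl⟩ := hedge e he.1
    exact ⟨a, b, hab, mem_sdiff.mpr ⟨has, he.2 a (mem_insert_self _ _)⟩,
      mem_sdiff.mpr ⟨hbs, he.2 b (mem_insert_of_mem (mem_singleton_self _))⟩, rfl⟩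
  have hK4' : ∀ (T : Finset α), K4Free (E.filter (fun e => ∀ z ∈ e, z ∉ T)) := by
    intro T a b c d h1 h2 h3 h4 h5 h6 m1 m2 m3 m4 m5 m6
    exact hK4 a b c d h1 h2 h3 h4 h5 h6 (filter_subset _ _ m1) (filter_subset _ _ m2)
      (filter_subset _ _ m3) (filter_subset _ _ m4) (filter_subset _ _ m5) (filter_subset _ _ m6)
  by_cases htri : ∃ a b c : α, a ≠ b ∧ a ≠ c ∧ b ≠ c ∧
      ({a, b} : Finset α) ∈ E ∧ ({a, c} : Finset α) ∈ E ∧ ({b, c} : Finset α) ∈ E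
  · -- triangle case
    obtain ⟨a, b, c, hab, hac, hbc, hEab, hEac, hEbc⟩ := htri
    have hmem : ∀ e ∈ E, ∀ z ∈ e, z ∈ s := by
      intro e he z hz
      obtain ⟨u, v, _, hus, hvs, rfl⟩ := hedge e he
      rcases mem_insert.mp hz with rfl | h
      · exact hus
      · rwa [mem_singleton.mp h]
    set T : Finset α := {a, b, c} with hT
    have hTs : T ⊆ s := by
      intro z hz
      rcases mem_insert.mp hz with rfl | hz
      · exact hmem _ hEab z (mem_insert_self _ _)
      rcases mem_insert.mp hz with rfl | hz
      · exact hmem _ hEab z (mem_insert_of_mem (mem_singleton_self _))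
      · rw [mem_singleton.mp hz]
        exact hmem _ hEbc c (mem_insert_of_mem (mem_singleton_self _))
    have hTcard : T.card = 3 := by
      rw [hT, card_insert_of_notMem (by simp [hab, hac]),
        card_insert_of_notMem (by simp [hbc]), card_singleton]
    have hN3 : 3 ≤ N := hTcard ▸ hcard ▸ card_le_card hTs
    have hfib : ∀ w ∈ s \ T, ∃ t ∈ T, ({t, w} : Finset α) ∉ E := by
      intro w hw
      rw [mem_sdiff] at hw
      have hwT := hw.2
      by_contra hcon
      push_neg at hcon
      have h1 := hcon a (by simp [hT])
      have h2 := hcon b (by simp [hT])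
      have h3 := hcon c (by simp [hT])
      have hwa : a ≠ w := fun h => hwT (by simp [hT, h])
      have hwb : b ≠ w := fun h => hwT (by simp [hT, h])
      have hwc : c ≠ w := fun h => hwT (by simp [hT, h])
      exact hK4 a b c w hab hac hwa hbc hwb hwc hEab (by rwa [pair_comm] at h3 ⊢)
        hEac h1 hEbc h2
    have hstep := remove_step s T E hedge hfib
    have hcard' : (s \ T).card = N - 3 := by
      rw [card_sdiff_of_subset hTs, hcard, hTcard]
    have hIH := ih (N - 3) (by omega) (s \ T) _ hcard' (hsub_inherit T) (hK4' T)
    rw [hTcard, hcard'] at hstep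
    -- arithmetic
    obtain ⟨M, rfl⟩ : ∃ M, N = M + 3 := ⟨N - 3, by omega⟩
    have harith : (M + 3) ^ 2 = M ^ 2 + (2 * M + 3) * 3 := by ring
    have : (M + 3) ^ 2 / 3 = M ^ 2 / 3 + (2 * M + 3) := by
      rw [harith, Nat.add_mul_div_right _ _ (by norm_num)]
    simp only [Nat.add_sub_cancel] at hstep hIH
    rw [this]
    have : Nat.choose 3 2 = 3 := by decide
    omega
  · -- triangle-free case
    push_neg at htri
    set T : Finset α := {x, y} with hT
    have hTcard : T.card = 2 := card_pair hxy
    have hTs : T ⊆ s := insert_subset hxs (singleton_subset_iff.mpr hys)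
    have hN2 : 2 ≤ N := hTcard ▸ hcard ▸ card_le_card hTs
    have hfib : ∀ w ∈ s \ T, ∃ t ∈ T, ({t, w} : Finset α) ∉ E := by
      intro w hw
      rw [mem_sdiff] at hw
      have hwT := hw.2
      have hwx : x ≠ w := fun h => hwT (by simp [hT, h])
      have hwy : y ≠ w := fun h => hwT (by simp [hT, h])
      by_contra hcon
      push_neg at hcon
      have h1 := hcon x (by simp [hT])
      have h2 := hcon y (by simp [hT])
      exact htri x y w hxy hwx hwy he₀ h1 h2
    have hstep := remove_step s T E hedge hfib
    have hcard' : (s \ T).card = N - 2 := by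
      rw [card_sdiff_of_subset hTs, hcard, hTcard]
    have hIH := ih (N - 2) (by omega) (s \ T) _ hcard' (hsub_inherit T) (hK4' T)
    rw [hTcard, hcard'] at hstep
    obtain ⟨M, rfl⟩ : ∃ M, N = M + 2 := ⟨N - 2, by omega⟩
    simp only [Nat.add_sub_cancel] at hstep hIH
    have key : M ^ 2 / 3 + 1 + 1 * M ≤ (M + 2) ^ 2 / 3 := by
      have h1 : M ^ 2 / 3 + 1 + 1 * M = (M ^ 2 + (M + 1) * 3) / 3 := by
        rw [Nat.add_mul_div_right _ _ (by norm_num)]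
        ring
      have h2 : (M ^ 2 + (M + 1) * 3) ≤ (M + 2) ^ 2 := by
        have : (M + 2) ^ 2 = M ^ 2 + (4 * M + 4) := by ring
        omega
      rw [h1]
      exact Nat.div_le_div_right h2
    have : Nat.choose 2 2 = 1 := by decide
    omega

namespace J2

variable {n : ℕ}

abbrev V (n : ℕ) := {A : Finset (Fin n) // A.card = 2}

lemma adj_iff (A B : V n) :
    (JohnsonGraph n 2).Adj A B ↔ A ≠ B ∧ (A.1 ∩ B.1).card = 1 := Iff.rfl

lemma inter_empty_of_not_adj {A B : V n} (hne : A ≠ B)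
    (hnadj : ¬ (JohnsonGraph n 2).Adj A B) : A.1 ∩ B.1 = ∅ := by
  have h2 : (A.1 ∩ B.1).card ≤ 2 := le_trans (card_le_card inter_subset_left) (le_of_eq A.2)
  have h1 : (A.1 ∩ B.1).card ≠ 1 := fun h => hnadj ⟨hne, h⟩
  have hne2 : (A.1 ∩ B.1).card ≠ 2 := by
    intro h
    apply hne
    have hsub : A.1 ∩ B.1 = A.1 :=
      eq_of_subset_of_card_le inter_subset_left (by rw [h, A.2])
    have : A.1 ⊆ B.1 := by rw [← hsub]; exact inter_subset_right
    exact Subtype.ext (eq_of_subset_of_card_le this (by rw [A.2, B.2]))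
  have : (A.1 ∩ B.1).card = 0 := by omega
  exact card_eq_zero.mp this

lemma adj_common {A B : V n} (hd : A.1 ∩ B.1 = ∅) {a c : Fin n}
    (ha : a ∈ A.1) (hc : c ∈ B.1) :
    ∃ (h : ({a, c} : Finset (Fin n)).card = 2),
      (JohnsonGraph n 2).Adj A ⟨{a, c}, h⟩ ∧ (JohnsonGraph n 2).Adj ⟨{a, c}, h⟩ B := by
  have hac : a ≠ c := by
    rintro rfl
    exact absurd (mem_inter.mpr ⟨ha, hc⟩) (by simp [hd])
  have hcA : c ∉ A.1 := fun h => absurd (mem_inter.mpr ⟨h, hc⟩) (by simp [hd])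
  have haB : a ∉ B.1 := fun h => absurd (mem_inter.mpr ⟨ha, h⟩) (by simp [hd])
  refine ⟨card_pair hac, ⟨?_, ?_⟩, ⟨?_, ?_⟩⟩
  · intro h
    have : c ∈ A.1 := by rw [congrArg Subtype.val h]; simp
    exact hcA this
  · have : A.1 ∩ {a, c} = {a} := by
      ext z
      simp only [mem_inter, mem_insert, mem_singleton]
      constructor
      · rintro ⟨hz, rfl | rfl⟩
        · rfl
        · exact absurd hz hcA
      · rintro rfl; exact ⟨ha, Or.inl rfl⟩
    rw [this, card_singleton]
  · intro h
    have : a ∈ B.1 := by rw [← congrArg Subtype.val h]; simp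
    exact haB this
  · have : ({a, c} : Finset (Fin n)) ∩ B.1 = {c} := by
      ext z
      simp only [mem_inter, mem_insert, mem_singleton]
      constructor
      · rintro ⟨rfl | rfl, hz⟩
        · exact absurd hz haB
        · rfl
      · rintro rfl; exact ⟨Or.inr rfl, hc⟩
    rw [this, card_singleton]

lemma dist_eq_two {A B : V n} (hd : A.1 ∩ B.1 = ∅) :
    (JohnsonGraph n 2).dist A B = 2 := by
  have hA : A.1.Nonempty := card_pos.mp (by rw [A.2]; norm_num)
  have hB : B.1.Nonempty := card_pos.mp (by rw [B.2]; norm_num)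
  obtain ⟨a, ha⟩ := hA
  obtain ⟨c, hc⟩ := hB
  obtain ⟨hcard, h1, h2⟩ := adj_common hd ha hc
  have hne : A ≠ B := by
    rintro rfl
    rw [inter_self] at hd
    exact absurd (hd ▸ ha) (notMem_empty a)
  have hnadj : ¬ (JohnsonGraph n 2).Adj A B := by
    rintro ⟨_, hcard1⟩
    rw [hd] at hcard1
    simp at hcard1
  let p : (JohnsonGraph n 2).Walk A B := SimpleGraph.Walk.cons h1 (SimpleGraph.Walk.cons h2 SimpleGraph.Walk.nil)
  have hle : (JohnsonGraph n 2).dist A B ≤ 2 := SimpleGraph.dist_le p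
  have h0 : (JohnsonGraph n 2).dist A B ≠ 0 := by
    intro h
    rcases SimpleGraph.dist_eq_zero_iff_eq_or_not_reachable.mp h with h' | h'
    · exact hne h'
    · exact h' ⟨p⟩
  have hne1 : (JohnsonGraph n 2).dist A B ≠ 1 := by
    rw [Ne, SimpleGraph.dist_eq_one_iff_adj]
    exact hnadj
  omega

lemma xvisible_of_common {X : Set (V n)} {A B W : V n}
    (h1 : (JohnsonGraph n 2).Adj A W) (h2 : (JohnsonGraph n 2).Adj W B)
    (hd : A.1 ∩ B.1 = ∅) (hW : W ∉ X) : XVisible (JohnsonGraph n 2) X A B := by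
  refine ⟨SimpleGraph.Walk.cons h1 (SimpleGraph.Walk.cons h2 SimpleGraph.Walk.nil), ?_, ?_⟩
  · rw [dist_eq_two hd]; simp
  · intro w hw hwX
    simp only [SimpleGraph.Walk.support_cons, SimpleGraph.Walk.support_nil,
      List.mem_cons, List.mem_singleton] at hw
    rcases hw with rfl | rfl | rfl | h
    · exact Or.inl rfl
    · exact absurd hwX hW
    · exact Or.inr rfl
    · exact absurd h List.not_mem_nil

lemma exists_middle {X : Set (V n)} {A B : V n} (hd : A.1 ∩ B.1 = ∅)
    (hvis : XVisible (JohnsonGraph n 2) X A B) :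
    ∃ W : V n, W ∉ X ∧ (JohnsonGraph n 2).Adj A W ∧ (JohnsonGraph n 2).Adj W B := by
  obtain ⟨p, hlen, hsupp⟩ := hvis
  rw [dist_eq_two hd] at hlen
  cases p with
  | nil => simp at hlen
  | cons h1 q =>
    rename_i W'
    cases q with
    | nil => simp at hlen
    | cons h2 r =>
      cases r with
      | nil =>
        refine ⟨W', ?_, h1, h2⟩
        intro hW
        have hmem : W' ∈ (SimpleGraph.Walk.cons h1 (SimpleGraph.Walk.cons h2 SimpleGraph.Walk.nil)).support := by
          simp
        rcases hsupp W' hmem hW with rfl | rfl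
        · exact h1.1 rfl
        · exact h2.1 rfl
      | cons h3 r' => simp at hlen

lemma middle_struct {A B W : V n} (hd : A.1 ∩ B.1 = ∅)
    (h1 : (JohnsonGraph n 2).Adj A W) (h2 : (JohnsonGraph n 2).Adj W B) :
    ∃ a c, a ∈ A.1 ∧ c ∈ B.1 ∧ W.1 = {a, c} := by
  obtain ⟨a, ha⟩ := card_eq_one.mp h1.2
  obtain ⟨c, hc⟩ := card_eq_one.mp h2.2
  have haA : a ∈ A.1 := (mem_inter.mp (ha ▸ mem_singleton_self a)).1
  have haW : a ∈ W.1 := (mem_inter.mp (ha ▸ mem_singleton_self a)).2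
  have hcW : c ∈ W.1 := (mem_inter.mp (hc ▸ mem_singleton_self c)).1
  have hcB : c ∈ B.1 := (mem_inter.mp (hc ▸ mem_singleton_self c)).2
  have hac : a ≠ c := by
    rintro rfl
    exact absurd (mem_inter.mpr ⟨haA, hcB⟩) (by simp [hd])
  refine ⟨a, c, haA, hcB, ?_⟩
  symm
  apply eq_of_subset_of_card_le
  · exact insert_subset haW (singleton_subset_iff.mpr hcW)
  · rw [W.2, card_pair hac]

end J2

namespace J2
variable {n : ℕ}

/-- the predicate: all elements with equal residues mod 3 coincide -/
def P (A : V n) : Prop := ∀ x ∈ A.1, ∀ y ∈ A.1, (x : ℕ) % 3 = (y : ℕ) % 3 → x = y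

instance : DecidablePred (P (n := n)) := fun A => by
  unfold P; infer_instance

noncomputable def Xlow (n : ℕ) : Finset (V n) := univ.filter P

lemma mem_Xlow_iff {A : V n} : A ∈ Xlow n ↔ P A := by
  simp [Xlow]

lemma pair_mods {A : V n} (hA : A ∈ Xlow n) {x y : Fin n} (hx : x ∈ A.1) (hy : y ∈ A.1)
    (hxy : x ≠ y) : (x : ℕ) % 3 ≠ (y : ℕ) % 3 :=
  fun h => hxy (mem_Xlow_iff.mp hA x hx y hy h)

lemma Xlow_isMV : IsMVSet (JohnsonGraph n 2) ↑(Xlow n) := by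
  intro u hu v hv
  rw [Finset.mem_coe] at hu hv
  by_cases huv : u = v
  · subst huv
    exact ⟨SimpleGraph.Walk.nil, by simp [SimpleGraph.dist_self], by simp⟩
  by_cases hadj : (JohnsonGraph n 2).Adj u v
  · refine ⟨SimpleGraph.Walk.cons hadj SimpleGraph.Walk.nil, ?_, ?_⟩
    · rw [SimpleGraph.dist_eq_one_iff_adj.mpr hadj]; simp
    · intro w hw _
      simp only [SimpleGraph.Walk.support_cons, SimpleGraph.Walk.support_nil,
        List.mem_cons, List.mem_singleton] at hw
      rcases hw with rfl | rfl | h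
      · exact Or.inl rfl
      · exact Or.inr rfl
      · exact absurd h List.not_mem_nil
  -- disjoint case
  have hd : u.1 ∩ v.1 = ∅ := inter_empty_of_not_adj huv hadj
  obtain ⟨a, b, hab, huab⟩ := card_eq_two.mp u.2
  obtain ⟨c, d, hcd, hvcd⟩ := card_eq_two.mp v.2
  have hau : a ∈ u.1 := by rw [huab]; simp
  have hbu : b ∈ u.1 := by rw [huab]; simp
  have hcv : c ∈ v.1 := by rw [hvcd]; simp
  have hdv : d ∈ v.1 := by rw [hvcd]; simp
  have hmab : (a : ℕ) % 3 ≠ (b : ℕ) % 3 := pair_mods hu hau hbu hab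
  have hmcd : (c : ℕ) % 3 ≠ (d : ℕ) % 3 := pair_mods hv hcv hdv hcd
  have key : ∃ x z, x ∈ u.1 ∧ z ∈ v.1 ∧ (x : ℕ) % 3 = (z : ℕ) % 3 := by
    have h3a : (a : ℕ) % 3 < 3 := Nat.mod_lt _ (by norm_num)
    have h3b : (b : ℕ) % 3 < 3 := Nat.mod_lt _ (by norm_num)
    have h3c : (c : ℕ) % 3 < 3 := Nat.mod_lt _ (by norm_num)
    have h3d : (d : ℕ) % 3 < 3 := Nat.mod_lt _ (by norm_num)
    have : (a : ℕ) % 3 = (c : ℕ) % 3 ∨ (a : ℕ) % 3 = (d : ℕ) % 3 ∨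
        (b : ℕ) % 3 = (c : ℕ) % 3 ∨ (b : ℕ) % 3 = (d : ℕ) % 3 := by omega
    rcases this with h | h | h | h
    · exact ⟨a, c, hau, hcv, h⟩
    · exact ⟨a, d, hau, hdv, h⟩
    · exact ⟨b, c, hbu, hcv, h⟩
    · exact ⟨b, d, hbu, hdv, h⟩
  obtain ⟨x, z, hxu, hzv, hmod⟩ := key
  obtain ⟨hcard, h1, h2⟩ := adj_common hd hxu hzv
  have hxz : x ≠ z := by
    rintro rfl
    exact absurd (mem_inter.mpr ⟨hxu, hzv⟩) (by simp [hd])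
  have hWnot : (⟨{x, z}, hcard⟩ : V n) ∉ (↑(Xlow n) : Set (V n)) := by
    rw [Finset.mem_coe, mem_Xlow_iff]
    intro hP
    exact hxz (hP x (by simp) z (by simp) hmod)
  exact xvisible_of_common h1 h2 hd hWnot

lemma card_Xlow : (Xlow n).card = n ^ 2 / 3 := by
  rw [← card_Spairs n]
  apply card_bij (fun (A : V n) (_ : A ∈ Xlow n) =>
    (((A.1.min' (card_pos.mp (by rw [A.2]; norm_num))) : Fin n).val,
     ((A.1.max' (card_pos.mp (by rw [A.2]; norm_num))) : Fin n).val))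
  · intro A hA
    have hne : A.1.Nonempty := card_pos.mp (by rw [A.2]; norm_num)
    have hlt : A.1.min' hne < A.1.max' hne := min'_lt_max'_of_card _ (by rw [A.2]; norm_num)
    simp only [Spairs, mem_filter, mem_product, mem_range]
    refine ⟨⟨(A.1.min' hne).isLt, (A.1.max' hne).isLt⟩, hlt, ?_⟩
    exact pair_mods hA (min'_mem _ _) (max'_mem _ _) (ne_of_lt hlt)
  · intro A hA B hB heq
    have hneA : A.1.Nonempty := card_pos.mp (by rw [A.2]; norm_num)
    have hneB : B.1.Nonempty := card_pos.mp (by rw [B.2]; norm_num)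
    have h1 : A.1.min' hneA = B.1.min' hneB := Fin.ext (congrArg Prod.fst heq)
    have h2 : A.1.max' hneA = B.1.max' hneB := Fin.ext (congrArg Prod.snd heq)
    have hstruct : ∀ (C : V n) (hC : C.1.Nonempty), C.1 = {C.1.min' hC, C.1.max' hC} := by
      intro C hC
      have hlt : C.1.min' hC < C.1.max' hC := min'_lt_max'_of_card _ (by rw [C.2]; norm_num)
      symm
      apply eq_of_subset_of_card_le
      · exact insert_subset (min'_mem _ _) (singleton_subset_iff.mpr (max'_mem _ _))
      · rw [C.2, card_pair (ne_of_lt hlt)]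
    apply Subtype.ext
    rw [hstruct A hneA, hstruct B hneB, h1, h2]
  · rintro ⟨i, j⟩ hp
    simp only [Spairs, mem_filter, mem_product, mem_range] at hp
    obtain ⟨⟨hi, hj⟩, hij, hmod⟩ := hp
    have hne : (⟨i, hi⟩ : Fin n) ≠ ⟨j, hj⟩ := by
      intro h; exact absurd (Fin.mk.injEq .. ▸ h) (by omega)
    refine ⟨⟨{⟨i, hi⟩, ⟨j, hj⟩}, card_pair hne⟩, ?_, ?_⟩
    · rw [mem_Xlow_iff]
      intro x hx y hy hxymod
      simp only [mem_insert, mem_singleton] at hx hy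
      rcases hx with rfl | rfl <;> rcases hy with rfl | rfl <;> simp_all
    · have hne' : Finset.Nonempty ({⟨i, hi⟩, ⟨j, hj⟩} : Finset (Fin n)) := insert_nonempty _ _
      have hmin : ({⟨i, hi⟩, ⟨j, hj⟩} : Finset (Fin n)).min' hne' = ⟨i, hi⟩ := by
        apply le_antisymm
        · exact min'_le _ _ (by simp)
        · apply le_min'
          intro y hy
          simp only [mem_insert, mem_singleton] at hy
          rcases hy with rfl | rfl
          · exact le_refl _
          · exact le_of_lt (by exact hij)
      have hmax : ({⟨i, hi⟩, ⟨j, hj⟩} : Finset (Fin n)).max' hne' = ⟨j, hj⟩ := by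
        apply le_antisymm
        · apply max'_le
          intro y hy
          simp only [mem_insert, mem_singleton] at hy
          rcases hy with rfl | rfl
          · exact le_of_lt (by exact hij)
          · exact le_refl _
        · exact le_max' _ _ (by simp)
      simp only []
      rw [hmin, hmax]

end J2

namespace J2
variable {n : ℕ}

lemma mv_upper (X : Finset (V n)) (hX : IsMVSet (JohnsonGraph n 2) ↑X) :
    X.card ≤ n ^ 2 / 3 := by
  classical
  set E : Finset (Finset (Fin n)) := X.image Subtype.val with hE
  have hcardE : E.card = X.card := card_image_of_injective _ Subtype.val_injective
  have hmemX : ∀ (e : Finset (Fin n)), e ∈ E → ∀ (hc : e.card = 2), (⟨e, hc⟩ : V n) ∈ X := by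
    intro e he hc
    obtain ⟨A, hA, hAe⟩ := mem_image.mp he
    have : (⟨e, hc⟩ : V n) = A := Subtype.ext hAe.symm
    rwa [this]
  have hedge : ∀ e ∈ E, ∃ x y, x ≠ y ∧ x ∈ (univ : Finset (Fin n)) ∧
      y ∈ (univ : Finset (Fin n)) ∧ e = {x, y} := by
    intro e he
    obtain ⟨A, _, hAe⟩ := mem_image.mp he
    obtain ⟨x, y, hxy, hxyeq⟩ := card_eq_two.mp (hAe ▸ A.2)
    exact ⟨x, y, hxy, mem_univ _, mem_univ _, hxyeq⟩
  have hK4 : K4Free E := by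
    intro a b c d hab hac had hbc hbd hcd m1 m2 m3 m4 m5 m6
    set u : V n := ⟨{a, b}, card_pair hab⟩ with hu
    set v : V n := ⟨{c, d}, card_pair hcd⟩ with hv
    have huX : u ∈ X := hmemX _ m1 _
    have hvX : v ∈ X := hmemX _ m2 _
    have hd : u.1 ∩ v.1 = ∅ := by
      ext z
      simp only [hu, hv, mem_inter, mem_insert, mem_singleton, notMem_empty, iff_false, not_and]
      rintro (rfl | rfl) (h | h) <;> simp_all
    have hvis := hX u (Finset.mem_coe.mpr huX) v (Finset.mem_coe.mpr hvX)
    obtain ⟨W, hWX, h1, h2⟩ := exists_middle hd hvis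
    obtain ⟨x, z, hxu, hzv, hWeq⟩ := middle_struct hd h1 h2
    have hWE : W.1 ∈ E := by
      rw [hWeq]
      simp only [hu] at hxu
      simp only [hv] at hzv
      rcases mem_insert.mp hxu with rfl | hx <;>
        [skip; rw [mem_singleton.mp hx]] <;>
      rcases mem_insert.mp hzv with rfl | hz <;>
        [skip; rw [mem_singleton.mp hz]; skip; rw [mem_singleton.mp hz]] <;>
      assumption
    apply hWX
    rw [Finset.mem_coe]
    have := hmemX W.1 hWE W.2
    rwa [Subtype.coe_eta] at this
  have := turan_aux n (univ : Finset (Fin n)) E (by simp) hedge hK4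
  omega

end J2


end JohnsonMV

/-- For `n ≥ 4`, the mutual-visibility number of the Johnson graph `J(n,2)`
equals `⌊n²/3⌋`. -/
theorem johnson_two_mvNumber (n : ℕ) (hn : 4 ≤ n) :
    mvNumber (JohnsonGraph n 2) = n ^ 2 / 3 := by
  classical
  unfold mvNumber
  apply le_antisymm
  · apply csSup_le
    · exact ⟨0, ⟨∅, by intro u hu; simp at hu, by simp⟩⟩
    · rintro m ⟨X, hX, rfl⟩
      exact JohnsonMV.J2.mv_upper X hX
  · apply le_csSup
    · refine ⟨Fintype.card (JohnsonMV.J2.V n), ?_⟩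
      rintro m ⟨X, _, rfl⟩
      exact Finset.card_le_univ X |>.trans (le_of_eq (Finset.card_univ))
    · exact ⟨JohnsonMV.J2.Xlow n, JohnsonMV.J2.Xlow_isMV, JohnsonMV.J2.card_Xlow⟩
end
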